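/- arXiv:0812.2017 — 4 statements merged into one kernel-verified Lean document; each statement's English description precedes it below -/
import Mathlib

section
/- Let (X, 𝒳, μ) be a probability space, let G be a countable amenable group, and let T be a measure-preserving action of G on X. Let Φ be a left Følner sequence in G. Then for all f ∈ L²(μ), the averages (1/|Φ_N|) Σ_{g ∈ Φ_N} f ∘ T_g converge in L²(μ) to Pf, where P is the orthogonal projection of L²(μ) onto the closed subspace of T-invariant functions (functions h with h ∘ T_g = h for all g ∈ G). -/
open MeasureTheory Filter Topology

/-- A left Følner sequence: finite nonempty sets with `|Φ N ∩ gΦ N|/|Φ N| → 1` for all `g`. -/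
def IsLeftFolner {G : Type*} [Group G] [DecidableEq G] (Φ : ℕ → Finset G) : Prop :=
  (∀ N, (Φ N).Nonempty) ∧
    ∀ g : G, Tendsto
      (fun N => (((Φ N) ∩ (Φ N).image (fun x => g * x)).card : ℝ) / ((Φ N).card : ℝ))
      atTop (𝓝 1)

/-- A right Følner sequence: finite nonempty sets with `|Φ N ∩ Φ N g|/|Φ N| → 1` for all `g`. -/
def IsRightFolner {G : Type*} [Group G] [DecidableEq G] (Φ : ℕ → Finset G) : Prop :=
  (∀ N, (Φ N).Nonempty) ∧
    ∀ g : G, Tendsto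
      (fun N => (((Φ N) ∩ (Φ N).image (fun x => x * g)).card : ℝ) / ((Φ N).card : ℝ))
      atTop (𝓝 1)

/-- A two-sided Følner sequence is both a left and a right Følner sequence. -/
def IsTwoSidedFolner {G : Type*} [Group G] [DecidableEq G] (Φ : ℕ → Finset G) : Prop :=
  IsLeftFolner Φ ∧ IsRightFolner Φ

set_option maxHeartbeats 3200000 in
/-- Mean ergodic theorem for amenable groups. For `f ∈ L²(μ)` the averages
`(1/|Φ_N|) Σ_{g ∈ Φ_N} f ∘ T_g` converge in `L²(μ)` to the orthogonal projection `Pf` of `f`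
onto the closed subspace of `T`-invariant functions. -/
theorem mean_ergodic_theorem_amenable
    {G X : Type*} [Group G] [Countable G] [DecidableEq G]
    [MeasurableSpace X] (μ : Measure X) [IsProbabilityMeasure μ]
    (T : G → X → X)
    (hT_mp : ∀ g, MeasurePreserving (T g) μ μ)
    (hT_bij : ∀ g, Function.Bijective (T g))
    (hT_hom : ∀ g h, T (g * h) = T g ∘ T h)
    (Φ : ℕ → Finset G) (hΦ : IsLeftFolner Φ)
    (f : X → ℝ) (hf : MemLp f 2 μ) :
    ∃ Pf : X → ℝ, MemLp Pf 2 μ ∧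
      -- `Pf` lies in the subspace of `T`-invariant functions
      (∀ g : G, (fun x => Pf (T g x)) =ᵐ[μ] Pf) ∧
      -- `f - Pf` is orthogonal to every `T`-invariant function, so `Pf` is the orthogonal
      -- projection of `f` onto that closed subspace
      (∀ h : X → ℝ, MemLp h 2 μ → (∀ g : G, (fun x => h (T g x)) =ᵐ[μ] h) →
        ∫ x, (f x - Pf x) * h x ∂μ = 0) ∧
      Tendsto (fun N =>
        eLpNorm (fun x => ((((Φ N).card : ℝ))⁻¹ * ∑ g ∈ Φ N, f (T g x)) - Pf x) 2 μ)
        atTop (𝓝 0) := by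
  classical
  -- `T 1 = id`
  have hT1 : T 1 = id := by
    funext x
    have h := congrFun (hT_hom 1 1) x
    rw [mul_one] at h
    exact ((hT_bij 1).injective h).symm
  -- the Koopman operators
  let U : G → (Lp ℝ 2 μ →ₗᵢ[ℝ] Lp ℝ 2 μ) :=
    fun g => Lp.compMeasurePreservingₗᵢ ℝ (T g) (hT_mp g)
  have hU_ae : ∀ (g : G) (v : Lp ℝ 2 μ), ⇑(U g v) =ᵐ[μ] (⇑v ∘ T g) :=
    fun g v => Lp.coeFn_compMeasurePreserving v (hT_mp g)
  have hUU : ∀ (a b : G) (v : Lp ℝ 2 μ), U a (U b v) = U (b * a) v := by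
    intro a b v
    apply Lp.ext
    have h1 : ⇑(U a (U b v)) =ᵐ[μ] (⇑(U b v) ∘ T a) := hU_ae a _
    have h2 : (⇑(U b v) ∘ T a) =ᵐ[μ] ((⇑v ∘ T b) ∘ T a) :=
      (hT_mp a).quasiMeasurePreserving.ae_eq_comp (hU_ae b v)
    have h3 : ((⇑v ∘ T b) ∘ T a) = (⇑v ∘ T (b * a)) := by
      rw [hT_hom b a]; rfl
    exact h1.trans (h2.trans (h3 ▸ (hU_ae (b * a) v).symm))
  have hU1 : ∀ v : Lp ℝ 2 μ, U 1 v = v := by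
    intro v
    apply Lp.ext
    have h1 := hU_ae 1 v
    rw [hT1] at h1
    simpa using h1
  -- the invariant subspace
  let M : Submodule ℝ (Lp ℝ 2 μ) :=
    { carrier := {v | ∀ g, U g v = v}
      add_mem' := fun hv hw g => by rw [map_add, hv g, hw g]
      zero_mem' := fun g => map_zero _
      smul_mem' := fun c v hv g => by rw [(U g).map_smul, hv g] }
  have hMclosed : IsClosed (M : Set (Lp ℝ 2 μ)) := by
    have hcar : (M : Set (Lp ℝ 2 μ)) = ⋂ g, {v | U g v = v} := by
      ext v; simp [M, Set.mem_iInter]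
    rw [hcar]
    exact isClosed_iInter fun g => isClosed_eq (U g).continuous continuous_id
  haveI : CompleteSpace M := hMclosed.completeSpace_coe
  set fL : Lp ℝ 2 μ := hf.toLp f with hfL_def
  set PfL : Lp ℝ 2 μ := (M.orthogonalProjectionOnto fL : Lp ℝ 2 μ) with hPfL_def
  have hPfL_mem : PfL ∈ M := (M.orthogonalProjectionOnto fL).2
  have hfLae : ⇑fL =ᵐ[μ] f := hf.coeFn_toLp
  -- the averaging operators
  let A : ℕ → (Lp ℝ 2 μ →L[ℝ] Lp ℝ 2 μ) := fun N =>
    (((Φ N).card : ℝ))⁻¹ • ∑ a ∈ Φ N, (U a).toContinuousLinearMap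
  have hA_apply : ∀ (N : ℕ) (v : Lp ℝ 2 μ),
      A N v = (((Φ N).card : ℝ))⁻¹ • ∑ a ∈ Φ N, U a v := by
    intro N v
    simp [A, ContinuousLinearMap.sum_apply]
  have hcard_pos : ∀ N, (0 : ℝ) < (Φ N).card := by
    intro N
    exact_mod_cast Finset.card_pos.mpr (hΦ.1 N)
  -- A N fixes M pointwise
  have hA_fix : ∀ (N : ℕ) (v : Lp ℝ 2 μ), v ∈ M → A N v = v := by
    intro N v hv
    rw [hA_apply]
    have hs : ∑ a ∈ Φ N, U a v = ((Φ N).card : ℕ) • v := by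
      rw [Finset.sum_congr rfl fun a _ => hv a, Finset.sum_const]
    rw [hs, ← Nat.cast_smul_eq_nsmul ℝ, smul_smul,
      inv_mul_cancel₀ (ne_of_gt (hcard_pos N)), one_smul]
  -- contraction bound
  have hA_norm : ∀ (N : ℕ) (v : Lp ℝ 2 μ), ‖A N v‖ ≤ ‖v‖ := by
    intro N v
    rw [hA_apply, norm_smul]
    have h1 : ‖∑ a ∈ Φ N, U a v‖ ≤ ((Φ N).card : ℝ) * ‖v‖ := by
      refine (norm_sum_le _ _).trans ?_
      rw [Finset.sum_congr rfl fun a _ => (U a).norm_map v, Finset.sum_const,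
        nsmul_eq_mul]
    have h2 : ‖(((Φ N).card : ℝ))⁻¹‖ = (((Φ N).card : ℝ))⁻¹ := by
      rw [Real.norm_eq_abs, abs_of_nonneg (inv_nonneg.mpr (hcard_pos N).le)]
    rw [h2]
    calc (((Φ N).card : ℝ))⁻¹ * ‖∑ a ∈ Φ N, U a v‖
        ≤ (((Φ N).card : ℝ))⁻¹ * (((Φ N).card : ℝ) * ‖v‖) := by
          exact mul_le_mul_of_nonneg_left h1 (inv_nonneg.mpr (hcard_pos N).le)
      _ = ‖v‖ := by
          rw [← mul_assoc, inv_mul_cancel₀ (ne_of_gt (hcard_pos N)), one_mul]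
  -- convergence to zero on generators
  have hgen : ∀ (g : G) (v : Lp ℝ 2 μ),
      Tendsto (fun N => A N (U g v - v)) atTop (𝓝 0) := by
    intro g v
    rw [tendsto_zero_iff_norm_tendsto_zero]
    have key : ∀ N, ‖A N (U g v - v)‖ ≤
        2 * (1 - (((Φ N) ∩ (Φ N).image (fun x => g * x)).card : ℝ) / ((Φ N).card : ℝ)) * ‖v‖ := by
      intro N
      set s := Φ N with hs_def
      set t := s.image (fun x => g * x) with ht_def
      have hinj : Function.Injective (fun x : G => g * x) := mul_right_injective g
      have hcards : t.card = s.card := Finset.card_image_of_injective s hinj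
      have e1 : ∑ a ∈ s, U a (U g v) = ∑ b ∈ t, U b v := by
        rw [ht_def, Finset.sum_image (fun a _ b _ hab => hinj hab)]
        exact Finset.sum_congr rfl fun a _ => hUU a g v
      have e2 : (∑ b ∈ t, U b v) - (∑ a ∈ s, U a v)
          = (∑ b ∈ t \ s, U b v) - (∑ a ∈ s \ t, U a v) := by
        have ha : ∑ b ∈ t ∩ s, U b v + ∑ b ∈ t \ s, U b v = ∑ b ∈ t, U b v :=
          Finset.sum_inter_add_sum_sdiff t s _
        have hb : ∑ a ∈ s ∩ t, U a v + ∑ a ∈ s \ t, U a v = ∑ a ∈ s, U a v :=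
          Finset.sum_inter_add_sum_sdiff s t _
        rw [← ha, ← hb, Finset.inter_comm t s]
        abel
      have e3 : A N (U g v - v)
          = ((s.card : ℝ))⁻¹ • ((∑ b ∈ t \ s, U b v) - (∑ a ∈ s \ t, U a v)) := by
        rw [map_sub, hA_apply, hA_apply, ← smul_sub, e1, e2]
      have hbound : ‖(∑ b ∈ t \ s, U b v) - (∑ a ∈ s \ t, U a v)‖
          ≤ (((t \ s).card : ℝ) + ((s \ t).card : ℝ)) * ‖v‖ := by
        refine (norm_sub_le _ _).trans ?_
        have b1 : ‖∑ b ∈ t \ s, U b v‖ ≤ ((t \ s).card : ℝ) * ‖v‖ := by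
          refine (norm_sum_le _ _).trans ?_
          rw [Finset.sum_congr rfl fun a _ => (U a).norm_map v, Finset.sum_const, nsmul_eq_mul]
        have b2 : ‖∑ a ∈ s \ t, U a v‖ ≤ ((s \ t).card : ℝ) * ‖v‖ := by
          refine (norm_sum_le _ _).trans ?_
          rw [Finset.sum_congr rfl fun a _ => (U a).norm_map v, Finset.sum_const, nsmul_eq_mul]
        nlinarith [b1, b2]
      -- card computations
      have c1 : ((t \ s).card : ℝ) = (s.card : ℝ) - ((s ∩ t).card : ℝ) := by
        have := Finset.card_sdiff_add_card_inter t s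
        rw [Finset.inter_comm t s] at this
        have : ((t \ s).card : ℝ) + ((s ∩ t).card : ℝ) = (t.card : ℝ) := by
          exact_mod_cast congrArg (Nat.cast : ℕ → ℝ) this
        rw [hcards] at this
        linarith
      have c2 : ((s \ t).card : ℝ) = (s.card : ℝ) - ((s ∩ t).card : ℝ) := by
        have := Finset.card_sdiff_add_card_inter s t
        have : ((s \ t).card : ℝ) + ((s ∩ t).card : ℝ) = (s.card : ℝ) := by
          exact_mod_cast congrArg (Nat.cast : ℕ → ℝ) this
        linarith
      have hnpos : (0 : ℝ) < (s.card : ℝ) := hcard_pos N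
      have e4 : ‖A N (U g v - v)‖
          ≤ ((s.card : ℝ))⁻¹ * ((((t \ s).card : ℝ) + ((s \ t).card : ℝ)) * ‖v‖) := by
        rw [e3, norm_smul, Real.norm_eq_abs, abs_of_nonneg (inv_nonneg.mpr hnpos.le)]
        exact mul_le_mul_of_nonneg_left hbound (inv_nonneg.mpr hnpos.le)
      refine e4.trans (le_of_eq ?_)
      rw [c1, c2]
      have h5 : (1 : ℝ) - ((s ∩ t).card : ℝ) / (s.card : ℝ)
          = ((s.card : ℝ))⁻¹ * ((s.card : ℝ) - ((s ∩ t).card : ℝ)) := by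
        rw [mul_sub, inv_mul_cancel₀ (ne_of_gt hnpos), div_eq_mul_inv, mul_comm]
      rw [h5]
      ring
    have hb : Tendsto (fun N =>
        2 * (1 - (((Φ N) ∩ (Φ N).image (fun x => g * x)).card : ℝ) / ((Φ N).card : ℝ)) * ‖v‖)
        atTop (𝓝 0) := by
      have h0 : Tendsto (fun N =>
          1 - (((Φ N) ∩ (Φ N).image (fun x => g * x)).card : ℝ) / ((Φ N).card : ℝ))
          atTop (𝓝 0) := by
        have := (tendsto_const_nhds (x := (1:ℝ)) (f := atTop)).sub (hΦ.2 g)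
        simpa using this
      have := (h0.const_mul 2).mul_const ‖v‖
      simpa using this
    exact squeeze_zero (fun N => norm_nonneg _) key hb
  -- convergence to zero on the span of generators
  let D : Submodule ℝ (Lp ℝ 2 μ) :=
    Submodule.span ℝ {w | ∃ g v, w = U g v - v}
  have hD : ∀ w ∈ D, Tendsto (fun N => A N w) atTop (𝓝 0) := by
    intro w hw
    induction hw using Submodule.span_induction with
    | mem x hx => obtain ⟨g, v, rfl⟩ := hx; exact hgen g v
    | zero =>
        have hz : (fun N => A N (0 : Lp ℝ 2 μ)) = fun _ => (0 : Lp ℝ 2 μ) := by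
          funext N; exact map_zero (A N)
        rw [hz]; exact tendsto_const_nhds
    | add x y _ _ hx hy =>
        have h := hx.add hy
        rw [add_zero] at h
        exact h.congr fun N => (map_add (A N) x y).symm
    | smul c x _ hx =>
        have h := hx.const_smul c
        rw [smul_zero] at h
        exact h.congr fun N => ((A N).map_smul c x).symm
  -- convergence to zero on the closure of the span
  have hDc : ∀ w ∈ D.topologicalClosure, Tendsto (fun N => A N w) atTop (𝓝 0) := by
    intro w hw
    rw [Metric.tendsto_atTop]
    intro ε hε
    have hw' : w ∈ closure (D : Set (Lp ℝ 2 μ)) := hw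
    obtain ⟨d, hdD, hd⟩ := Metric.mem_closure_iff.mp hw' (ε / 2) (by linarith)
    obtain ⟨N₀, hN₀⟩ := Metric.tendsto_atTop.mp (hD d hdD) (ε / 2) (by linarith)
    refine ⟨N₀, fun n hn => ?_⟩
    have h1 : ‖A n d‖ < ε / 2 := by
      have := hN₀ n hn
      rwa [dist_zero_right] at this
    have h2 : ‖w - d‖ < ε / 2 := by
      rwa [dist_eq_norm] at hd
    have h3 : A n w = A n (w - d) + A n d := by rw [map_sub]; abel
    rw [dist_zero_right, h3]
    calc ‖A n (w - d) + A n d‖ ≤ ‖A n (w - d)‖ + ‖A n d‖ := norm_add_le _ _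
      _ ≤ ‖w - d‖ + ‖A n d‖ := by linarith [hA_norm n (w - d)]
      _ < ε := by linarith
  -- Dᗮ ≤ M
  have hDM : Dᗮ ≤ M := by
    intro u hu
    intro g
    have hgen_orth : ∀ (g' : G) (v : Lp ℝ 2 μ), inner ℝ (U g' v - v) u = (0 : ℝ) := by
      intro g' v
      exact (Submodule.mem_orthogonal D u).mp hu _
        (Submodule.subset_span ⟨g', v, rfl⟩)
    have hkey : ∀ v : Lp ℝ 2 μ, inner ℝ v (U g u - u) = (0 : ℝ) := by
      intro v
      have hv_eq : U g (U g⁻¹ v) = v := by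
        rw [hUU, inv_mul_cancel, hU1]
      have h1 : inner ℝ v (U g u) = (inner ℝ (U g⁻¹ v) u : ℝ) := by
        conv_lhs => rw [← hv_eq]
        exact (U g).inner_map_map (U g⁻¹ v) u
      have h2 : inner ℝ (U g⁻¹ v) u = (inner ℝ v u : ℝ) := by
        have h3 := hgen_orth g⁻¹ v
        rw [inner_sub_left, sub_eq_zero] at h3
        exact h3
      rw [inner_sub_right, h1, h2, sub_self]
    have := hkey (U g u - u)
    rwa [inner_self_eq_zero, sub_eq_zero] at this
  -- Mᗮ is contained in the closure of the span of generators
  have hMperp : Mᗮ ≤ D.topologicalClosure := by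
    rw [← Submodule.orthogonal_orthogonal_eq_closure]
    exact Submodule.orthogonal_le hDM
  have hwperp : fL - PfL ∈ Mᗮ := Submodule.sub_starProjection_mem_orthogonal (K := M) fL
  have hconv : Tendsto (fun N => A N fL) atTop (𝓝 PfL) := by
    have h1 : Tendsto (fun N => A N (fL - PfL)) atTop (𝓝 0) := hDc _ (hMperp hwperp)
    have h2 : ∀ N, A N fL = A N (fL - PfL) + PfL := by
      intro N
      rw [map_sub, hA_fix N PfL hPfL_mem]
      abel
    have h3 := h1.add (tendsto_const_nhds (x := PfL) (f := atTop))
    rw [zero_add] at h3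
    exact h3.congr fun N => (h2 N).symm
  refine ⟨⇑PfL, Lp.memLp PfL, ?_, ?_, ?_⟩
  · -- invariance of Pf
    intro g
    have h1 := hU_ae g PfL
    rw [hPfL_mem g] at h1
    exact h1.symm
  · -- orthogonality of f - Pf to invariant functions
    intro h hh hinv
    set hL : Lp ℝ 2 μ := hh.toLp h with hhL_def
    have hhL : ⇑hL =ᵐ[μ] h := hh.coeFn_toLp
    have hLmem : hL ∈ M := by
      intro g
      apply Lp.ext
      calc ⇑(U g hL) =ᵐ[μ] ⇑hL ∘ T g := hU_ae g hL
        _ =ᵐ[μ] (fun x => h (T g x)) := (hT_mp g).quasiMeasurePreserving.ae_eq_comp hhL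
        _ =ᵐ[μ] h := hinv g
        _ =ᵐ[μ] ⇑hL := hhL.symm
    have horth : inner ℝ hL (fL - PfL) = (0 : ℝ) :=
      (Submodule.mem_orthogonal M (fL - PfL)).mp hwperp hL hLmem
    have horth' : inner ℝ (fL - PfL) hL = (0 : ℝ) := by
      rw [real_inner_comm]
      exact horth
    have hae : (fun x => (f x - ⇑PfL x) * h x) =ᵐ[μ] fun x => (⇑(fL - PfL) x) * (⇑hL x) := by
      filter_upwards [hfLae, hhL, Lp.coeFn_sub fL PfL] with x e1 e2 e3
      rw [e3]
      simp [e1, e2]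
    calc ∫ x, (f x - ⇑PfL x) * h x ∂μ
        = ∫ x, (⇑(fL - PfL) x) * (⇑hL x) ∂μ := integral_congr_ae hae
      _ = inner ℝ (fL - PfL) hL := by
          rw [L2.inner_def]
          congr 1
          funext x
          simp only [RCLike.inner_apply, conj_trivial]
          ring
      _ = 0 := horth'
  · -- the convergence statement
    have hsum : ∀ s : Finset G, ⇑(∑ a ∈ s, U a fL) =ᵐ[μ] fun x => ∑ a ∈ s, f (T a x) := by
      intro s
      induction s using Finset.induction_on with
      | empty => simp; exact Lp.coeFn_zero ℝ 2 μ
      | @insert a s ha ih =>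
        rw [Finset.sum_insert ha]
        have h1 := Lp.coeFn_add (U a fL) (∑ b ∈ s, U b fL)
        have h2 : ⇑(U a fL) =ᵐ[μ] fun x => f (T a x) :=
          (hU_ae a fL).trans ((hT_mp a).quasiMeasurePreserving.ae_eq_comp hfLae)
        filter_upwards [h1, h2, ih] with x e1 e2 e3
        rw [e1]
        simp only [Pi.add_apply]
        rw [e2, e3, Finset.sum_insert ha]
    have hANae : ∀ N, ⇑(A N fL) =ᵐ[μ]
        fun x => (((Φ N).card : ℝ))⁻¹ * ∑ g ∈ Φ N, f (T g x) := by
      intro N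
      rw [hA_apply]
      have h1 := Lp.coeFn_smul ((((Φ N).card : ℝ))⁻¹) (∑ a ∈ Φ N, U a fL)
      filter_upwards [h1, hsum (Φ N)] with x e1 e2
      rw [e1]
      simp only [Pi.smul_apply, smul_eq_mul]
      rw [e2]
    have heq : ∀ N, eLpNorm
        (fun x => ((((Φ N).card : ℝ))⁻¹ * ∑ g ∈ Φ N, f (T g x)) - ⇑PfL x) 2 μ
        = ENNReal.ofReal ‖A N fL - PfL‖ := by
      intro N
      have hae : (fun x => ((((Φ N).card : ℝ))⁻¹ * ∑ g ∈ Φ N, f (T g x)) - ⇑PfL x)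
          =ᵐ[μ] ⇑(A N fL - PfL) := by
        filter_upwards [hANae N, Lp.coeFn_sub (A N fL) PfL] with x e1 e2
        rw [e2]
        simp [e1]
      rw [eLpNorm_congr_ae hae, Lp.norm_def, ENNReal.ofReal_toReal (Lp.eLpNorm_ne_top _)]
    have hnorm : Tendsto (fun N => ‖A N fL - PfL‖) atTop (𝓝 0) := by
      have h1 := hconv.sub (tendsto_const_nhds (x := PfL) (f := atTop))
      rw [sub_self] at h1
      exact tendsto_zero_iff_norm_tendsto_zero.mp h1
    have hofReal : Tendsto (fun N => ENNReal.ofReal ‖A N fL - PfL‖) atTop (𝓝 0) := by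
      have h1 := ENNReal.tendsto_ofReal hnorm
      simpa using h1
    exact hofReal.congr fun N => (heq N).symm
end

section
/- Let G be a countable group, let ℋ be a Hilbert space, and let (x_g)_{g ∈ G} be a family of vectors in ℋ with ‖x_g‖ ≤ 1 for all g. Let c > 0, let F ⊆ G be a finite nonempty set, and let Φ ⊆ G be a finite nonempty set such that |Φ △ gΦ| < c|Φ| for all g ∈ F. Then ‖(1/|Φ|) Σ_{g ∈ Φ} x_g − (1/|F|) Σ_{h ∈ F} (1/|Φ|) Σ_{g ∈ Φ} x_{hg}‖ < 2c. -/
/-- van der Corput-type observation. If `‖x_g‖ ≤ 1` for all `g`, `F` is a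
finite nonempty set, and `Φ` is a finite nonempty set with `|Φ △ gΦ| < c|Φ|` for all `g ∈ F`,
then the average of `x` over `Φ` differs from the average over `h ∈ F` of the averages of
`g ↦ x (h * g)` over `Φ` by less than `2c`. -/
theorem vanDerCorput_folner_observation
    {G : Type*} [Group G] [Countable G] [DecidableEq G]
    {H : Type*} [NormedAddCommGroup H] [InnerProductSpace ℝ H] [CompleteSpace H]
    (x : G → H) (hx : ∀ g, ‖x g‖ ≤ 1)
    (c : ℝ) (hc : 0 < c)
    (F : Finset G) (hF : F.Nonempty)
    (Φ : Finset G) (hΦ : Φ.Nonempty)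
    (h : ∀ g ∈ F, ((symmDiff Φ (Φ.image (fun y => g * y))).card : ℝ) < c * Φ.card) :
    ‖((Φ.card : ℝ)⁻¹ • ∑ g ∈ Φ, x g) -
      (F.card : ℝ)⁻¹ • ∑ h ∈ F, (Φ.card : ℝ)⁻¹ • ∑ g ∈ Φ, x (h * g)‖ < 2 * c := by
  have hΦc : (0:ℝ) < (Φ.card : ℝ) := by exact_mod_cast Finset.card_pos.mpr hΦ
  have hFc : (0:ℝ) < (F.card : ℝ) := by exact_mod_cast Finset.card_pos.mpr hF
  have key : ∀ h₀ ∈ F,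
      ‖((Φ.card : ℝ)⁻¹ • ∑ g ∈ Φ, x g) - (Φ.card : ℝ)⁻¹ • ∑ g ∈ Φ, x (h₀ * g)‖ < c := by
    intro h₀ hh
    rw [← smul_sub, norm_smul, Real.norm_eq_abs, abs_inv, abs_of_pos hΦc]
    set B : Finset G := Φ.image (fun y => h₀ * y) with hB
    have hsum : ∑ g ∈ Φ, x (h₀ * g) = ∑ g ∈ B, x g := by
      rw [hB, Finset.sum_image]
      intro a _ b _ hab
      exact mul_left_cancel hab
    have hnorm : ‖(∑ g ∈ Φ, x g) - ∑ g ∈ Φ, x (h₀ * g)‖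
        ≤ ((symmDiff Φ B).card : ℝ) := by
      rw [hsum, ← Finset.sum_sdiff_sub_sum_sdiff]
      have h1 : ‖∑ g ∈ Φ \ B, x g‖ ≤ ((Φ \ B).card : ℝ) := by
        calc ‖∑ g ∈ Φ \ B, x g‖ ≤ ∑ g ∈ Φ \ B, ‖x g‖ := norm_sum_le _ _
        _ ≤ ∑ _g ∈ Φ \ B, (1:ℝ) := Finset.sum_le_sum fun g _ => hx g
        _ = ((Φ \ B).card : ℝ) := by simp
      have h2 : ‖∑ g ∈ B \ Φ, x g‖ ≤ ((B \ Φ).card : ℝ) := by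
        calc ‖∑ g ∈ B \ Φ, x g‖ ≤ ∑ g ∈ B \ Φ, ‖x g‖ := norm_sum_le _ _
        _ ≤ ∑ _g ∈ B \ Φ, (1:ℝ) := Finset.sum_le_sum fun g _ => hx g
        _ = ((B \ Φ).card : ℝ) := by simp
      have hcard : (symmDiff Φ B).card = (Φ \ B).card + (B \ Φ).card := by
        rw [symmDiff_def, Finset.sup_eq_union]
        exact Finset.card_union_of_disjoint disjoint_sdiff_sdiff
      calc ‖(∑ g ∈ Φ \ B, x g) - ∑ g ∈ B \ Φ, x g‖
          ≤ ‖∑ g ∈ Φ \ B, x g‖ + ‖∑ g ∈ B \ Φ, x g‖ := norm_sub_le _ _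
        _ ≤ ((Φ \ B).card : ℝ) + ((B \ Φ).card : ℝ) := add_le_add h1 h2
        _ = ((symmDiff Φ B).card : ℝ) := by rw [hcard]; push_cast; ring
    calc (Φ.card : ℝ)⁻¹ * ‖(∑ g ∈ Φ, x g) - ∑ g ∈ Φ, x (h₀ * g)‖
        ≤ (Φ.card : ℝ)⁻¹ * ((symmDiff Φ B).card : ℝ) := by
          exact mul_le_mul_of_nonneg_left hnorm (by positivity)
      _ < (Φ.card : ℝ)⁻¹ * (c * Φ.card) := by
          exact mul_lt_mul_of_pos_left (h h₀ hh) (by positivity)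
      _ = c := by field_simp
  have havg : ((Φ.card : ℝ)⁻¹ • ∑ g ∈ Φ, x g) -
      (F.card : ℝ)⁻¹ • ∑ h ∈ F, (Φ.card : ℝ)⁻¹ • ∑ g ∈ Φ, x (h * g)
      = (F.card : ℝ)⁻¹ • ∑ h₀ ∈ F,
        (((Φ.card : ℝ)⁻¹ • ∑ g ∈ Φ, x g) - (Φ.card : ℝ)⁻¹ • ∑ g ∈ Φ, x (h₀ * g)) := by
    rw [Finset.sum_sub_distrib, smul_sub, Finset.sum_const]
    congr 1
    rw [← Nat.cast_smul_eq_nsmul ℝ, smul_smul, inv_mul_cancel₀ hFc.ne', one_smul]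
  rw [havg, norm_smul, Real.norm_eq_abs, abs_inv, abs_of_pos hFc]
  have hlt : ‖∑ h₀ ∈ F, (((Φ.card : ℝ)⁻¹ • ∑ g ∈ Φ, x g)
      - (Φ.card : ℝ)⁻¹ • ∑ g ∈ Φ, x (h₀ * g))‖ < F.card * c := by
    calc ‖∑ h₀ ∈ F, (((Φ.card : ℝ)⁻¹ • ∑ g ∈ Φ, x g)
        - (Φ.card : ℝ)⁻¹ • ∑ g ∈ Φ, x (h₀ * g))‖
        ≤ ∑ h₀ ∈ F, ‖((Φ.card : ℝ)⁻¹ • ∑ g ∈ Φ, x g)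
          - (Φ.card : ℝ)⁻¹ • ∑ g ∈ Φ, x (h₀ * g)‖ := norm_sum_le _ _
      _ < ∑ _h₀ ∈ F, c := Finset.sum_lt_sum_of_nonempty hF key
      _ = F.card * c := by rw [Finset.sum_const, nsmul_eq_mul]
  calc (F.card : ℝ)⁻¹ * ‖∑ h₀ ∈ F, (((Φ.card : ℝ)⁻¹ • ∑ g ∈ Φ, x g)
        - (Φ.card : ℝ)⁻¹ • ∑ g ∈ Φ, x (h₀ * g))‖
      < (F.card : ℝ)⁻¹ * (F.card * c) := mul_lt_mul_of_pos_left hlt (by positivity)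
    _ = c := by field_simp
    _ < 2 * c := by linarith
end

section
/- Let G be a countable amenable group, d ∈ ℕ, and let (u_g)_{g ∈ Gᵈ} be a bounded family of real numbers indexed by Gᵈ. Suppose there are real numbers J and J′ such that for every choice of two-sided Følner sequences Φ⁽¹⁾, …, Φ⁽ᵈ⁾ in G: (i) the box averages (1/(|Φ⁽¹⁾_N| ⋯ |Φ⁽ᵈ⁾_N|)) Σ_{g ∈ Φ⁽¹⁾_N × ⋯ × Φ⁽ᵈ⁾_N} u_g converge to J as N → ∞, and (ii) the iterated limits lim_{N₁→∞} (1/|Φ⁽¹⁾_{N₁}|) Σ_{g₁ ∈ Φ⁽¹⁾_{N₁}} ⋯ lim_{N_d→∞} (1/|Φ⁽ᵈ⁾_{N_d}|) Σ_{g_d ∈ Φ⁽ᵈ⁾_{N_d}} u_{(g₁, …, g_d)} exist and equal J′. Then J = J′. -/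
open MeasureTheory Filter Topology

/-- The box average `(1/(|Φ⁽¹⁾_{N₁}| ⋯ |Φ⁽ᵈ⁾_{N_d}|)) Σ_{g ∈ Φ⁽¹⁾_{N₁} × ⋯ × Φ⁽ᵈ⁾_{N_d}} u g`. -/
noncomputable def boxAvg {G : Type*} {d : ℕ} (u : (Fin d → G) → ℝ)
    (Φ : Fin d → ℕ → Finset G) (N : Fin d → ℕ) : ℝ :=
  (∏ i, ((Φ i (N i)).card : ℝ))⁻¹ * ∑ g ∈ Fintype.piFinset (fun i => Φ i (N i)), u g

/-- `NestedLim Φ u J'` expresses that the iterated limit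
`lim_{N₁→∞} (1/|Φ⁽¹⁾_{N₁}|) Σ_{g₁ ∈ Φ⁽¹⁾_{N₁}} ⋯ lim_{N_d→∞} (1/|Φ⁽ᵈ⁾_{N_d}|) Σ_{g_d ∈ Φ⁽ᵈ⁾_{N_d}} u (g₁, …, g_d)`
exists and equals `J'`: each inner iterated limit exists (for each value of the outer
variables) and the outer averaged limits exist. -/
def NestedLim {G : Type*} : ∀ {d : ℕ}, (Fin d → ℕ → Finset G) → ((Fin d → G) → ℝ) → ℝ → Prop
  | 0, _, u, J => u (fun i => i.elim0) = J
  | _ + 1, Φ, u, J => ∃ v : G → ℝ,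
      (∀ g : G, NestedLim (fun i => Φ i.succ) (fun w => u (Fin.cons g w)) (v g)) ∧
      Filter.Tendsto (fun N => (((Φ 0 N).card : ℝ))⁻¹ * ∑ g ∈ Φ 0 N, v g)
        Filter.atTop (nhds J)

-- aux : sum over piFinset decomposes
lemma sum_piFinset_cons {G : Type*} [DecidableEq G] {d : ℕ} (s : Fin (d+1) → Finset G)
    (F : (Fin (d+1) → G) → ℝ) :
    ∑ f ∈ Fintype.piFinset s, F f
      = ∑ g ∈ s 0, ∑ w ∈ Fintype.piFinset (fun i => s i.succ), F (Fin.cons g w) := by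
  rw [← Finset.sum_product']
  refine (Finset.sum_nbij' (fun f => (f 0, Fin.tail f)) (fun p => Fin.cons p.1 p.2)
    ?_ ?_ ?_ ?_ ?_)
  · intro f hf
    simp only [Fintype.mem_piFinset] at hf
    simp only [Finset.mem_product, Fintype.mem_piFinset]
    exact ⟨hf 0, fun i => hf i.succ⟩
  · intro p hp
    simp only [Finset.mem_product, Fintype.mem_piFinset] at hp
    simp only [Fintype.mem_piFinset]
    intro i
    induction i using Fin.cases with
    | zero => simpa using hp.1
    | succ i => simpa using hp.2 i
  · intro f _; exact Fin.cons_self_tail f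
  · intro p _; simp
  · intro f _; rw [Fin.cons_self_tail]

lemma boxAvg_cons {G : Type*} [DecidableEq G] {d : ℕ} (u : (Fin (d+1) → G) → ℝ)
    (Φ : Fin (d+1) → ℕ → Finset G) (N : Fin (d+1) → ℕ) :
    boxAvg u Φ N
      = ((Φ 0 (N 0)).card : ℝ)⁻¹ * ∑ g ∈ Φ 0 (N 0),
          boxAvg (fun w => u (Fin.cons g w)) (fun i => Φ i.succ) (fun i => N i.succ) := by
  unfold boxAvg
  rw [Fin.prod_univ_succ, sum_piFinset_cons]
  conv_rhs => rw [← Finset.mul_sum]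
  rw [mul_inv]
  ring

lemma approx {G : Type*} [DecidableEq G] :
    ∀ (d : ℕ) (Φ : Fin d → ℕ → Finset G), (∀ i N, (Φ i N).Nonempty) →
    ∀ (k : ℕ) (s : Finset (Fin k → G)) (u : (Fin k → G) → (Fin d → G) → ℝ)
      (J : (Fin k → G) → ℝ),
    (∀ a ∈ s, NestedLim Φ (u a) (J a)) →
    ∀ ε : ℝ, 0 < ε → ∀ K : ℕ, ∃ M : Fin d → ℕ,
      (∀ i, K ≤ M i) ∧ ∀ a ∈ s, |boxAvg (u a) Φ M - J a| < ε := by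
  intro d
  induction d with
  | zero =>
    intro Φ _ k s u J h ε hε K
    refine ⟨fun _ => K, fun i => le_rfl, fun a ha => ?_⟩
    have hb : boxAvg (u a) Φ (fun _ => K) = u a (fun i => i.elim0) := by
      unfold boxAvg
      rw [Finset.univ_eq_empty, Finset.prod_empty, inv_one, one_mul]
      rw [show (Fintype.piFinset (fun i : Fin 0 => Φ i K)) = {fun i => i.elim0} from ?_]
      · rw [Finset.sum_singleton]
      · apply Finset.eq_singleton_iff_unique_mem.mpr
        constructor
        · exact Fintype.mem_piFinset.mpr (fun i => i.elim0)
        · intro f _; funext i; exact i.elim0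
    rw [hb, h a ha, sub_self, abs_zero]
    exact hε
  | succ d ih =>
    intro Φ hne k s u J h ε hε K
    have h' : ∀ a, ∃ v : G → ℝ, a ∈ s →
        ((∀ g : G, NestedLim (fun i => Φ i.succ) (fun w => u a (Fin.cons g w)) (v g)) ∧
          Tendsto (fun N => (((Φ 0 N).card : ℝ))⁻¹ * ∑ g ∈ Φ 0 N, v g) atTop (𝓝 (J a))) := by
      intro a
      by_cases ha : a ∈ s
      · obtain ⟨v, hv⟩ := h a ha
        exact ⟨v, fun _ => hv⟩
      · exact ⟨fun _ => 0, fun c => absurd c ha⟩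
    choose v hv using h'
    have hε2 : (0:ℝ) < ε / 2 := by linarith
    -- choose N₁
    have hev : ∀ᶠ N in atTop, ∀ a ∈ s,
        |(((Φ 0 N).card : ℝ))⁻¹ * ∑ g ∈ Φ 0 N, v a g - J a| < ε / 2 := by
      rw [Filter.eventually_all_finset]
      intro a ha
      have := (hv a ha).2
      have h2 := Metric.tendsto_nhds.mp this (ε/2) hε2
      filter_upwards [h2] with N hN
      rwa [Real.dist_eq] at hN
    obtain ⟨N₁, hN₁, hN₁K⟩ := (hev.and (eventually_ge_atTop K)).exists
    -- new family
    set s' : Finset (Fin (k+1) → G) :=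
      (Φ 0 N₁ ×ˢ s).image (fun p : G × (Fin k → G) => Fin.cons p.1 p.2) with hs'
    have hmem : ∀ (g : G) (a : Fin k → G), g ∈ Φ 0 N₁ → a ∈ s → Fin.cons g a ∈ s' := by
      intro g a hg ha
      exact Finset.mem_image.mpr ⟨(g, a), Finset.mem_product.mpr ⟨hg, ha⟩, rfl⟩
    have hNL' : ∀ b ∈ s', NestedLim (fun i => Φ i.succ)
        (fun w => u (Fin.tail b) (Fin.cons (b 0) w)) (v (Fin.tail b) (b 0)) := by
      intro b hb
      obtain ⟨p, hp, rfl⟩ := Finset.mem_image.mp hb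
      obtain ⟨hp1, hp2⟩ := Finset.mem_product.mp hp
      simp only [Fin.tail_cons, Fin.cons_zero]
      exact (hv p.2 hp2).1 p.1
    obtain ⟨M, hMK, hM⟩ := ih (fun i => Φ i.succ) (fun i N => hne i.succ N) (k+1) s'
      (fun b => fun w => u (Fin.tail b) (Fin.cons (b 0) w))
      (fun b => v (Fin.tail b) (b 0)) hNL' (ε/2) hε2 K
    refine ⟨Fin.cons N₁ M, ?_, ?_⟩
    · intro i
      induction i using Fin.cases with
      | zero => simpa using hN₁K
      | succ i => simpa using hMK i
    · intro a ha
      rw [boxAvg_cons]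
      set c : ℝ := ((Φ 0 N₁).card : ℝ) with hc
      have hcpos : (0:ℝ) < c := by
        rw [hc]
        exact_mod_cast Finset.card_pos.mpr (hne 0 N₁)
      have key : ∀ g ∈ Φ 0 N₁,
          |boxAvg (fun w => u a (Fin.cons g w)) (fun i => Φ i.succ) M - v a g| < ε/2 := by
        intro g hg
        have := hM (Fin.cons g a) (hmem g a hg ha)
        simpa using this
      have h1 : |c⁻¹ * ∑ g ∈ Φ 0 N₁, boxAvg (fun w => u a (Fin.cons g w)) (fun i => Φ i.succ) M
          - c⁻¹ * ∑ g ∈ Φ 0 N₁, v a g| ≤ ε/2 := by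
        rw [← mul_sub, ← Finset.sum_sub_distrib, abs_mul,
          abs_inv, abs_of_pos hcpos]
        calc c⁻¹ * |∑ g ∈ Φ 0 N₁, (boxAvg (fun w => u a (Fin.cons g w)) (fun i => Φ i.succ) M - v a g)|
            ≤ c⁻¹ * ∑ g ∈ Φ 0 N₁, |boxAvg (fun w => u a (Fin.cons g w)) (fun i => Φ i.succ) M - v a g| := by
              gcongr
              exact Finset.abs_sum_le_sum_abs _ _
          _ ≤ c⁻¹ * ∑ g ∈ Φ 0 N₁, (ε/2) := by
              gcongr with g hg
              exact le_of_lt (key g hg)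
          _ = c⁻¹ * (c * (ε/2)) := by
              rw [Finset.sum_const, hc]
              push_cast
              ring
          _ = ε/2 := by field_simp
      have h2 := hN₁ a ha
      calc |c⁻¹ * ∑ g ∈ Φ 0 N₁, boxAvg (fun w => u a (Fin.cons g w)) (fun i => Φ i.succ) M - J a|
          ≤ |c⁻¹ * ∑ g ∈ Φ 0 N₁, boxAvg (fun w => u a (Fin.cons g w)) (fun i => Φ i.succ) M
              - c⁻¹ * ∑ g ∈ Φ 0 N₁, v a g| + |c⁻¹ * ∑ g ∈ Φ 0 N₁, v a g - J a| := abs_sub_le _ _ _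
        _ < ε/2 + ε/2 := by
            apply add_lt_add_of_le_of_lt h1 h2
        _ = ε := by ring

/-- If, for every choice of two-sided Følner sequences, the box averages of
a bounded family `u` converge to `J` and the iterated limits exist and equal `J'`, then
`J = J'`. -/
theorem box_limit_eq_iterated_limit
    {G : Type*} [Group G] [Countable G] [DecidableEq G]
    (hG : ∃ Φ : ℕ → Finset G, IsTwoSidedFolner Φ)
    (d : ℕ) (u : (Fin d → G) → ℝ) (hu : ∃ C, ∀ g, |u g| ≤ C)
    (J J' : ℝ)
    (hbox : ∀ Φ : Fin d → ℕ → Finset G, (∀ i, IsTwoSidedFolner (Φ i)) →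
      Tendsto (fun N => boxAvg u Φ (fun _ => N)) atTop (𝓝 J))
    (hiter : ∀ Φ : Fin d → ℕ → Finset G, (∀ i, IsTwoSidedFolner (Φ i)) →
      NestedLim Φ u J') :
    J = J' := by
  obtain ⟨Φ₀, hΦ₀⟩ := hG
  set Φ : Fin d → ℕ → Finset G := fun _ => Φ₀ with hΦdef
  have hΦ : ∀ i, IsTwoSidedFolner (Φ i) := fun _ => hΦ₀
  have hne : ∀ (i : Fin d) (N : ℕ), (Φ i N).Nonempty := fun i N => hΦ₀.1.1 N
  have hNL : NestedLim Φ u J' := hiter Φ hΦ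
  have happrox : ∀ N : ℕ, ∃ M : Fin d → ℕ, (∀ i, N ≤ M i) ∧
      |boxAvg u Φ M - J'| < 1/((N:ℝ)+1) := by
    intro N
    have h1 : (0:ℝ) < 1/((N:ℝ)+1) := by positivity
    obtain ⟨M, hM1, hM2⟩ := approx d Φ hne 0 {fun i => i.elim0}
      (fun _ => u) (fun _ => J') (fun a _ => by
        convert hNL) (1/((N:ℝ)+1)) h1 N
    exact ⟨M, hM1, hM2 _ (Finset.mem_singleton_self _)⟩
  choose M hM1 hM2 using happrox
  set Ψ : Fin d → ℕ → Finset G := fun i N => Φ₀ (M N i) with hΨdef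
  have hMi : ∀ i : Fin d, Tendsto (fun N => M N i) atTop atTop :=
    fun i => tendsto_atTop_mono (fun N => hM1 N i) tendsto_id
  have hΨ : ∀ i, IsTwoSidedFolner (Ψ i) := by
    intro i
    refine ⟨⟨fun N => hΦ₀.1.1 _, fun g => (hΦ₀.1.2 g).comp (hMi i)⟩,
      ⟨fun N => hΦ₀.2.1 _, fun g => (hΦ₀.2.2 g).comp (hMi i)⟩⟩
  have hJ : Tendsto (fun N => boxAvg u Ψ (fun _ => N)) atTop (𝓝 J) := hbox Ψ hΨ
  have heq : ∀ N, boxAvg u Ψ (fun _ => N) = boxAvg u Φ (M N) := fun N => rfl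
  have hJ' : Tendsto (fun N => boxAvg u Φ (M N)) atTop (𝓝 J') := by
    rw [tendsto_iff_dist_tendsto_zero]
    apply squeeze_zero (fun N => dist_nonneg)
      (fun N => le_of_lt (by rw [Real.dist_eq]; exact hM2 N))
    exact tendsto_one_div_add_atTop_nhds_zero_nat
  rw [show (fun N => boxAvg u Ψ (fun _ => N)) = (fun N => boxAvg u Φ (M N)) from funext heq] at hJ
  exact tendsto_nhds_unique hJ hJ'
end

section
/- Let (X, 𝒳, μ) be a probability space and let T : X → X be an invertible measurable transformation which preserves μ. Then for every B ∈ 𝒳 and every c > 0, the set {(n, m) ∈ ℤ² : μ(B ∩ T^{−n}B ∩ T^{−m}(B ∩ T^{−n}B)) > μ(B)⁴ − c} meets every sufficiently large square in ℤ²; that is, there exists M₀ ∈ ℕ such that for all M ≥ M₀ and all N₁, N₂ ∈ ℤ, the set intersects [N₁, N₁+M] × [N₂, N₂+M]. -/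
open Filter Finset MeasureTheory
open scoped InnerProductSpace Topology ENNReal

namespace BergelsonAux

variable {H : Type*} [NormedAddCommGroup H] [InnerProductSpace ℝ H] [CompleteSpace H]

noncomputable def Wc (W : H ≃ₗᵢ[ℝ] H) : H →L[ℝ] H := W.toLinearIsometry.toContinuousLinearMap

noncomputable def Pj (W : H ≃ₗᵢ[ℝ] H) (v : H) : H :=
  (Submodule.orthogonalProjectionOnto ((Wc W).eqLocus (1 : H →L[ℝ] H)) v : H)

noncomputable def bA (W : H ≃ₗᵢ[ℝ] H) (M : ℕ) (v : H) : H :=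
  ((M : ℝ)+1)⁻¹ • ∑ k ∈ Finset.range (M+1), (W^(k:ℤ)) v

variable (W : H ≃ₗᵢ[ℝ] H)

lemma zpow_apply_add (a b : ℤ) (v : H) : (W^(a+b)) v = (W^a) ((W^b) v) := by
  rw [zpow_add]; rfl

lemma inner_shift (a b : ℤ) (x y : H) : ⟪(W^a) x, (W^b) y⟫_ℝ = ⟪x, (W^(b-a)) y⟫_ℝ := by
  have : (W^b) y = (W^a) ((W^(b-a)) y) := by rw [← zpow_apply_add]; ring_nf
  rw [this, (W^a).inner_map_map]

lemma fix_zpow {v : H} (hv : W v = v) : ∀ n : ℤ, (W^n) v = v := by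
  have h1 : ∀ k : ℕ, (W^(k:ℤ)) v = v := by
    intro k; induction k with
    | zero => simp
    | succ k ih =>
      rw [show ((k+1 : ℕ) : ℤ) = 1 + (k:ℤ) by push_cast; ring, zpow_apply_add, ih, zpow_one]
      exact hv
  intro n
  rcases n with k | k
  · exact h1 k
  · have h2 : (W^((k+1:ℕ):ℤ)) ((W^(Int.negSucc k)) v) = v := by
      rw [← zpow_apply_add]
      have : ((k+1:ℕ):ℤ) + Int.negSucc k = 0 := by
        rw [Int.negSucc_eq]; push_cast; ring
      rw [this]; simp
    have hinj : Function.Injective ⇑(W^((k+1:ℕ):ℤ)) := (W^((k+1:ℕ):ℤ)).injective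
    apply hinj; rw [h2, h1]

lemma Pj_mem (v : H) : W (Pj W v) = Pj W v := by
  have := (Submodule.orthogonalProjectionOnto ((Wc W).eqLocus (1 : H →L[ℝ] H)) v).2
  rw [LinearMap.mem_eqLocus] at this
  exact this

lemma Pj_fix (v : H) (n : ℤ) : (W^n) (Pj W v) = Pj W v :=
  fix_zpow W (Pj_mem W v) n

lemma Pj_inner (u v : H) : ⟪Pj W u, v⟫_ℝ = ⟪u, Pj W v⟫_ℝ :=
  Submodule.inner_starProjection_left_eq_right ((Wc W).eqLocus (1 : H →L[ℝ] H)) u v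

lemma Pj_idem (v : H) : Pj W (Pj W v) = Pj W v := by
  unfold Pj
  congr 1
  exact Submodule.orthogonalProjectionOnto_mem_subspace_eq_self (K := (Wc W).eqLocus (1 : H →L[ℝ] H)) _

lemma inner_Pj_self (v : H) : ⟪v, Pj W v⟫_ℝ = ‖Pj W v‖^2 := by
  have h := Pj_inner W (v := Pj W v) (u := v)
  rw [Pj_idem] at h
  rw [← h, real_inner_self_eq_norm_sq]

lemma Pj_norm_le (v : H) : ‖Pj W v‖ ≤ ‖v‖ := by
  rcases eq_or_ne (Pj W v) 0 with h | h
  · simp [h]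
  · have h1 : ‖Pj W v‖^2 = ⟪v, Pj W v⟫_ℝ := (inner_Pj_self W v).symm
    have h2 : ⟪v, Pj W v⟫_ℝ ≤ ‖v‖ * ‖Pj W v‖ := real_inner_le_norm _ _
    have h3 : ‖Pj W v‖ > 0 := norm_pos_iff.2 h
    nlinarith [h3]

lemma tendsto_bA (v : H) : Tendsto (fun M => bA W M v) atTop (𝓝 (Pj W v)) := by
  have h := (Wc W).tendsto_birkhoffAverage_orthogonalProjection
    (W.toLinearIsometry.norm_toContinuousLinearMap_le) v
  have hiter : ∀ k : ℕ, (⇑(Wc W))^[k] v = (W^(k:ℤ)) v := by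
    intro k; induction k with
    | zero => simp
    | succ k ih =>
      rw [Function.iterate_succ_apply', ih,
        show ((k+1:ℕ):ℤ) = 1+(k:ℤ) by push_cast; ring, zpow_apply_add, zpow_one]
      rfl
  have heq : ∀ M : ℕ, bA W M v = birkhoffAverage ℝ (Wc W) _root_.id (M+1) v := by
    intro M
    rw [birkhoffAverage, birkhoffSum]
    simp only [_root_.id]
    rw [bA]
    congr 1
    · push_cast; ring
    · exact Finset.sum_congr rfl fun k _ => (hiter k).symm
  rw [show (fun M => bA W M v) = (fun N => birkhoffAverage ℝ (Wc W) _root_.id N v) ∘ (· + 1) by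
    funext M; simp [heq M]]
  exact h.comp (tendsto_add_atTop_nat 1)



/-! pure average lemmas -/

noncomputable def pav (N : ℤ) (M : ℕ) (F : ℤ → ℝ) : ℝ :=
  ((M:ℝ)+1)⁻¹ * ∑ j ∈ Finset.range (M+1), F (N + j)

noncomputable def dav (M : ℕ) (F : ℤ → ℝ) : ℝ :=
  (((M:ℝ)+1)^2)⁻¹ * ∑ p ∈ Finset.range (M+1) ×ˢ Finset.range (M+1), F ((p.1:ℤ) - (p.2:ℤ))

lemma Mpos (M : ℕ) : (0:ℝ) < (M:ℝ)+1 := by positivity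

lemma pav_const (N : ℤ) (M : ℕ) (c : ℝ) : pav N M (fun _ => c) = c := by
  simp [pav]
  field_simp

lemma dav_const (M : ℕ) (c : ℝ) : dav M (fun _ => c) = c := by
  simp [dav, Finset.card_product]
  field_simp

lemma pav_le_pav {F G : ℤ → ℝ} (h : ∀ z, F z ≤ G z) (N : ℤ) (M : ℕ) :
    pav N M F ≤ pav N M G := by
  unfold pav
  have := Finset.sum_le_sum (fun j (_ : j ∈ Finset.range (M+1)) => h (N + j))
  have h2 : (0:ℝ) ≤ ((M:ℝ)+1)⁻¹ := by positivity
  exact mul_le_mul_of_nonneg_left this h2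

lemma dav_le_dav {F G : ℤ → ℝ} (h : ∀ z, F z ≤ G z) (M : ℕ) :
    dav M F ≤ dav M G := by
  unfold dav
  have := Finset.sum_le_sum
    (fun p (_ : p ∈ Finset.range (M+1) ×ˢ Finset.range (M+1)) => h ((p.1:ℤ) - (p.2:ℤ)))
  have h2 : (0:ℝ) ≤ (((M:ℝ)+1)^2)⁻¹ := by positivity
  exact mul_le_mul_of_nonneg_left this h2

lemma pav_sub (N : ℤ) (M : ℕ) (F G : ℤ → ℝ) :
    pav N M (fun z => F z - G z) = pav N M F - pav N M G := by
  unfold pav; rw [Finset.sum_sub_distrib]; ring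

lemma dav_sub (M : ℕ) (F G : ℤ → ℝ) :
    dav M (fun z => F z - G z) = dav M F - dav M G := by
  unfold dav; rw [Finset.sum_sub_distrib]; ring

lemma dav_add (M : ℕ) (F G : ℤ → ℝ) :
    dav M (fun z => F z + G z) = dav M F + dav M G := by
  unfold dav; rw [Finset.sum_add_distrib]; ring

lemma pav_sq_le (N : ℤ) (M : ℕ) (F : ℤ → ℝ) :
    (pav N M F)^2 ≤ pav N M (fun z => F z^2) := by
  unfold pav
  have h := sq_sum_le_card_mul_sum_sq (s := Finset.range (M+1)) (f := fun j => F (N + j))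
  rw [Finset.card_range] at h
  push_cast at h
  have hM := Mpos M
  calc (((M:ℝ)+1)⁻¹ * ∑ j ∈ Finset.range (M+1), F (N + j))^2
      = (((M:ℝ)+1)⁻¹)^2 * (∑ j ∈ Finset.range (M+1), F (N + j))^2 := by ring
    _ ≤ (((M:ℝ)+1)⁻¹)^2 * (((M:ℝ)+1) * ∑ j ∈ Finset.range (M+1), F (N+j)^2) :=
        mul_le_mul_of_nonneg_left h (by positivity)
    _ = ((M:ℝ)+1)⁻¹ * ∑ j ∈ Finset.range (M+1), F (N+j)^2 := by
        field_simp

lemma dav_sq_le (M : ℕ) (F : ℤ → ℝ) :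
    (dav M F)^2 ≤ dav M (fun z => F z^2) := by
  unfold dav
  have h := sq_sum_le_card_mul_sum_sq (s := Finset.range (M+1) ×ˢ Finset.range (M+1))
    (f := fun p => F ((p.1:ℤ) - (p.2:ℤ)))
  rw [Finset.card_product, Finset.card_range] at h
  push_cast at h
  have hM := Mpos M
  calc ((((M:ℝ)+1)^2)⁻¹ * ∑ p ∈ Finset.range (M+1) ×ˢ Finset.range (M+1), F ((p.1:ℤ) - (p.2:ℤ)))^2
      = ((((M:ℝ)+1)^2)⁻¹)^2 * (∑ p ∈ Finset.range (M+1) ×ˢ Finset.range (M+1), F ((p.1:ℤ) - (p.2:ℤ)))^2 := by ring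
    _ ≤ ((((M:ℝ)+1)^2)⁻¹)^2 * ((((M:ℝ)+1)*((M:ℝ)+1)) * ∑ p ∈ Finset.range (M+1) ×ˢ Finset.range (M+1), F ((p.1:ℤ) - (p.2:ℤ))^2) :=
        mul_le_mul_of_nonneg_left h (by positivity)
    _ = (((M:ℝ)+1)^2)⁻¹ * ∑ p ∈ Finset.range (M+1) ×ˢ Finset.range (M+1), F ((p.1:ℤ) - (p.2:ℤ))^2 := by
        field_simp

lemma exists_ge_pav (N : ℤ) (M : ℕ) (F : ℤ → ℝ) :
    ∃ j : ℕ, j ≤ M ∧ pav N M F ≤ F (N + j) := by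
  by_contra hcon
  push_neg at hcon
  have h : ∀ j ∈ Finset.range (M+1), F (N + j) < pav N M F := by
    intro j hj
    exact hcon j (Nat.lt_succ_iff.mp (Finset.mem_range.mp hj))
  have hsum := Finset.sum_lt_sum_of_nonempty ⟨0, Finset.mem_range.mpr (Nat.succ_pos M)⟩ h
  rw [Finset.sum_const, Finset.card_range, nsmul_eq_mul] at hsum
  have hM := Mpos M
  have : pav N M F < pav N M F := by
    unfold pav
    calc ((M:ℝ)+1)⁻¹ * ∑ j ∈ Finset.range (M+1), F (N + j)
        < ((M:ℝ)+1)⁻¹ * ((M+1 : ℕ) * pav N M F) := by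
          apply mul_lt_mul_of_pos_left hsum (by positivity)
      _ = pav N M F := by push_cast; field_simp
  exact lt_irrefl _ this

lemma pav_dav_swap (N : ℤ) (M M' : ℕ) (F : ℤ → ℤ → ℝ) :
    pav N M (fun n => dav M' (fun e => F n e)) = dav M' (fun e => pav N M (fun n => F n e)) := by
  unfold pav dav
  simp only [Finset.mul_sum]
  rw [Finset.sum_comm]
  exact Finset.sum_congr rfl fun p _ => Finset.sum_congr rfl fun j _ => by ring

lemma dav_dav_swap (M M' : ℕ) (F : ℤ → ℤ → ℝ) :
    dav M (fun d => dav M' (fun e => F d e)) = dav M' (fun e => dav M (fun d => F d e)) := by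
  unfold dav
  simp only [Finset.mul_sum]
  rw [Finset.sum_comm]
  exact Finset.sum_congr rfl fun p _ => Finset.sum_congr rfl fun q _ => by ring


section Wpart
variable {H : Type*} [NormedAddCommGroup H] [InnerProductSpace ℝ H] [CompleteSpace H]
variable (W : H ≃ₗᵢ[ℝ] H)

lemma bA_norm_le (M : ℕ) (v : H) : ‖bA W M v‖ ≤ ‖v‖ := by
  unfold bA
  rw [norm_smul]
  have h1 : ‖∑ k ∈ Finset.range (M+1), (W^(k:ℤ)) v‖ ≤ ((M:ℝ)+1) * ‖v‖ := by
    calc ‖∑ k ∈ Finset.range (M+1), (W^(k:ℤ)) v‖ ≤ ∑ k ∈ Finset.range (M+1), ‖(W^(k:ℤ)) v‖ :=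
          norm_sum_le _ _
      _ = ∑ k ∈ Finset.range (M+1), ‖v‖ := by
          exact Finset.sum_congr rfl fun k _ => (W^(k:ℤ)).norm_map v
      _ = ((M:ℝ)+1) * ‖v‖ := by rw [Finset.sum_const, Finset.card_range, nsmul_eq_mul]; push_cast; ring
  have hM := Mpos M
  calc ‖(((M:ℝ)+1)⁻¹ : ℝ)‖ * ‖∑ k ∈ Finset.range (M+1), (W^(k:ℤ)) v‖
      = ((M:ℝ)+1)⁻¹ * ‖∑ k ∈ Finset.range (M+1), (W^(k:ℤ)) v‖ := by
        rw [Real.norm_eq_abs, abs_of_pos (by positivity)]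
    _ ≤ ((M:ℝ)+1)⁻¹ * (((M:ℝ)+1) * ‖v‖) := by
        apply mul_le_mul_of_nonneg_left h1 (by positivity)
    _ = ‖v‖ := by field_simp

lemma inner_W_bA (x y : H) (N : ℤ) (M : ℕ) :
    ⟪x, (W^N) (bA W M y)⟫_ℝ = ((M:ℝ)+1)⁻¹ * ∑ k ∈ Finset.range (M+1), ⟪x, (W^(N+(k:ℤ))) y⟫_ℝ := by
  unfold bA
  rw [_root_.map_smul, map_sum, inner_smul_right, inner_sum]
  congr 1
  exact Finset.sum_congr rfl fun k _ => by rw [← zpow_apply_add]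

lemma norm_bA_sq (M : ℕ) (v : H) :
    ‖bA W M v‖^2 = dav M (fun e => ⟪v, (W^e) v⟫_ℝ) := by
  unfold bA dav
  rw [norm_smul, mul_pow, Real.norm_eq_abs, sq_abs, ← real_inner_self_eq_norm_sq]
  rw [inner_sum]
  have h : ∀ k ∈ Finset.range (M+1),
      ⟪∑ k' ∈ Finset.range (M+1), (W^(k':ℤ)) v, (W^(k:ℤ)) v⟫_ℝ
      = ∑ k' ∈ Finset.range (M+1), ⟪v, (W^((k:ℤ) - (k':ℤ))) v⟫_ℝ := by
    intro k _
    rw [sum_inner]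
    exact Finset.sum_congr rfl fun k' _ => inner_shift W _ _ _ _
  rw [Finset.sum_congr rfl h, ← Finset.sum_product']
  rw [inv_pow]

lemma inner_Pj_bA (M : ℕ) (v : H) : ⟪Pj W v, bA W M v⟫_ℝ = ‖Pj W v‖^2 := by
  unfold bA
  rw [inner_smul_right, inner_sum]
  have h : ∀ k ∈ Finset.range (M+1), ⟪Pj W v, (W^(k:ℤ)) v⟫_ℝ = ‖Pj W v‖^2 := by
    intro k _
    conv_lhs => rw [← Pj_fix W v (k:ℤ)]
    rw [(W^(k:ℤ)).inner_map_map, real_inner_comm, inner_Pj_self]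
  rw [Finset.sum_congr rfl h, Finset.sum_const, Finset.card_range, nsmul_eq_mul]
  push_cast
  have hM := Mpos M
  field_simp

lemma bA_orth (M : ℕ) (v : H) :
    ‖bA W M v‖^2 = ‖Pj W v‖^2 + ‖bA W M v - Pj W v‖^2 := by
  have h0 : ⟪Pj W v, bA W M v - Pj W v⟫_ℝ = 0 := by
    rw [inner_sub_right, inner_Pj_bA, real_inner_self_eq_norm_sq, sub_self]
  have hdecomp : bA W M v = Pj W v + (bA W M v - Pj W v) := by abel
  calc ‖bA W M v‖^2 = ‖Pj W v + (bA W M v - Pj W v)‖^2 := by rw [← hdecomp]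
    _ = ‖Pj W v‖^2 + 2 * ⟪Pj W v, bA W M v - Pj W v⟫_ℝ + ‖bA W M v - Pj W v‖^2 := by
        rw [← real_inner_self_eq_norm_sq, ← real_inner_self_eq_norm_sq, ← real_inner_self_eq_norm_sq]
        rw [inner_add_add_self, real_inner_comm (bA W M v - Pj W v) (Pj W v)]
        ring
    _ = ‖Pj W v‖^2 + ‖bA W M v - Pj W v‖^2 := by rw [h0]; ring

lemma inner_W_bA_est (v : H) (hv : ‖v‖ ≤ 1) (N : ℤ) (M : ℕ) :
    |⟪v, (W^N) (bA W M v)⟫_ℝ - ‖Pj W v‖^2| ≤ ‖bA W M v - Pj W v‖ := by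
  have hdecomp : (W^N) (bA W M v) = Pj W v + (W^N) (bA W M v - Pj W v) := by
    rw [map_sub, Pj_fix]; abel
  rw [hdecomp, inner_add_right]
  have h1 : ⟪v, Pj W v⟫_ℝ = ‖Pj W v‖^2 := inner_Pj_self W v
  rw [h1]
  rw [add_sub_cancel_left]
  calc |⟪v, (W^N) (bA W M v - Pj W v)⟫_ℝ| ≤ ‖v‖ * ‖(W^N) (bA W M v - Pj W v)‖ :=
        abs_real_inner_le_norm _ _
    _ = ‖v‖ * ‖bA W M v - Pj W v‖ := by rw [(W^N).norm_map]
    _ ≤ 1 * ‖bA W M v - Pj W v‖ := by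
        apply mul_le_mul_of_nonneg_right hv (norm_nonneg _)
    _ = ‖bA W M v - Pj W v‖ := one_mul _


lemma block_sum (L : ℕ) (v : H) (q : ℕ) :
    ‖∑ j ∈ Finset.range (q*L), (W^(j:ℤ)) v‖ ≤ q * ‖∑ i ∈ Finset.range L, (W^(i:ℤ)) v‖ := by
  induction q with
  | zero => simp
  | succ q ih =>
    have hsplit : ∑ j ∈ Finset.range ((q+1)*L), (W^(j:ℤ)) v
        = (∑ j ∈ Finset.range (q*L), (W^(j:ℤ)) v)
          + ∑ j ∈ Finset.Ico (q*L) ((q+1)*L), (W^(j:ℤ)) v := by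
      rw [Finset.range_eq_Ico, Finset.range_eq_Ico]
      exact (Finset.sum_Ico_consecutive _ (Nat.zero_le (q*L))
        (by nlinarith [Nat.le_succ q] : q*L ≤ (q+1)*L)).symm
    have hblock : ∑ j ∈ Finset.Ico (q*L) ((q+1)*L), (W^(j:ℤ)) v
        = (W^((q*L : ℕ) : ℤ)) (∑ i ∈ Finset.range L, (W^(i:ℤ)) v) := by
      rw [Finset.sum_Ico_eq_sum_range]
      have hcard : (q+1)*L - q*L = L := by
        rw [Nat.succ_mul]; omega
      rw [hcard, map_sum]
      refine Finset.sum_congr rfl fun i _ => ?_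
      have hci : ((q*L+i : ℕ) : ℤ) = ((q*L : ℕ):ℤ) + (i:ℤ) := by push_cast; ring
      rw [hci, zpow_apply_add]
    rw [hsplit, hblock]
    calc ‖(∑ j ∈ Finset.range (q*L), (W^(j:ℤ)) v)
          + (W^((q*L : ℕ) : ℤ)) (∑ i ∈ Finset.range L, (W^(i:ℤ)) v)‖
        ≤ ‖∑ j ∈ Finset.range (q*L), (W^(j:ℤ)) v‖
          + ‖(W^((q*L : ℕ) : ℤ)) (∑ i ∈ Finset.range L, (W^(i:ℤ)) v)‖ := norm_add_le _ _
      _ ≤ q * ‖∑ i ∈ Finset.range L, (W^(i:ℤ)) v‖ + ‖∑ i ∈ Finset.range L, (W^(i:ℤ)) v‖ := by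
          rw [(W^((q*L : ℕ) : ℤ)).norm_map]
          exact add_le_add_left ih _
      _ = (q+1 : ℕ) * ‖∑ i ∈ Finset.range L, (W^(i:ℤ)) v‖ := by push_cast; ring

lemma bA_block {M'' M : ℕ} (h : M'' ≤ M) (v : H) :
    ‖bA W M v‖ ≤ ‖bA W M'' v‖ + ((M'':ℝ)+1)/((M:ℝ)+1) * ‖v‖ := by
  set L := M''+1 with hL
  set n := M+1 with hn
  set q := n / L with hq
  set ρ := n % L with hρ
  have hLpos : 0 < L := Nat.succ_pos _
  have hmod : L * q + ρ = n := Nat.div_add_mod n L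
  have hmod2 : q * L + ρ = n := by rw [mul_comm q L]; exact hmod
  have hρlt : ρ < L := Nat.mod_lt _ hLpos
  have hS : ‖∑ i ∈ Finset.range L, (W^(i:ℤ)) v‖ = ((M'':ℝ)+1) * ‖bA W M'' v‖ := by
    unfold bA
    rw [norm_smul, Real.norm_eq_abs, abs_of_pos (by positivity)]
    have hM'' : ((M'':ℝ)+1) ≠ 0 := by positivity
    field_simp
    rfl
  have hsum : ‖∑ j ∈ Finset.range n, (W^(j:ℤ)) v‖
      ≤ (q : ℝ) * (((M'':ℝ)+1) * ‖bA W M'' v‖) + ((M'':ℝ)+1) * ‖v‖ := by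
    have hsplit : ∑ j ∈ Finset.range n, (W^(j:ℤ)) v
        = (∑ j ∈ Finset.range (q*L), (W^(j:ℤ)) v) + ∑ j ∈ Finset.Ico (q*L) n, (W^(j:ℤ)) v := by
      rw [Finset.range_eq_Ico, Finset.range_eq_Ico]
      exact (Finset.sum_Ico_consecutive _ (Nat.zero_le (q*L)) (by omega : q*L ≤ n)).symm
    have hrem : ‖∑ j ∈ Finset.Ico (q*L) n, (W^(j:ℤ)) v‖ ≤ ((M'':ℝ)+1) * ‖v‖ := by
      calc ‖∑ j ∈ Finset.Ico (q*L) n, (W^(j:ℤ)) v‖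
          ≤ ∑ j ∈ Finset.Ico (q*L) n, ‖(W^(j:ℤ)) v‖ := norm_sum_le _ _
        _ = ∑ j ∈ Finset.Ico (q*L) n, ‖v‖ :=
            Finset.sum_congr rfl fun j _ => (W^(j:ℤ)).norm_map v
        _ = ((n - q*L : ℕ) : ℝ) * ‖v‖ := by
            rw [Finset.sum_const, Nat.card_Ico, nsmul_eq_mul]
        _ ≤ ((M'':ℝ)+1) * ‖v‖ := by
            apply mul_le_mul_of_nonneg_right _ (norm_nonneg v)
            have : n - q*L = ρ := by omega
            rw [this]
            push_cast [hL]
            have : (ρ : ℝ) < (M'':ℝ)+1 := by exact_mod_cast (by omega : ρ < M''+1)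
            linarith
    calc ‖∑ j ∈ Finset.range n, (W^(j:ℤ)) v‖
        ≤ ‖∑ j ∈ Finset.range (q*L), (W^(j:ℤ)) v‖ + ‖∑ j ∈ Finset.Ico (q*L) n, (W^(j:ℤ)) v‖ := by
          rw [hsplit]; exact norm_add_le _ _
      _ ≤ (q:ℝ) * ‖∑ i ∈ Finset.range L, (W^(i:ℤ)) v‖ + ((M'':ℝ)+1) * ‖v‖ :=
          add_le_add (block_sum W L v q) hrem
      _ = (q : ℝ) * (((M'':ℝ)+1) * ‖bA W M'' v‖) + ((M'':ℝ)+1) * ‖v‖ := by rw [hS]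
  have hqL : (q : ℝ) * ((M'':ℝ)+1) ≤ (M:ℝ)+1 := by
    have : q * L ≤ n := by omega
    have := (Nat.cast_le (α := ℝ)).mpr this
    push_cast [hL, hn] at this
    nlinarith [this]
  have hMpos : (0:ℝ) < (M:ℝ)+1 := by positivity
  have hbA : ‖bA W M v‖ = ((M:ℝ)+1)⁻¹ * ‖∑ j ∈ Finset.range n, (W^(j:ℤ)) v‖ := by
    unfold bA
    rw [norm_smul, Real.norm_eq_abs, abs_of_pos (by positivity), hn]
  rw [hbA]
  have h1 : ((M:ℝ)+1)⁻¹ * ‖∑ j ∈ Finset.range n, (W^(j:ℤ)) v‖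
      ≤ ((M:ℝ)+1)⁻¹ * ((q : ℝ) * (((M'':ℝ)+1) * ‖bA W M'' v‖) + ((M'':ℝ)+1) * ‖v‖) :=
    mul_le_mul_of_nonneg_left hsum (by positivity)
  have h2 : ((M:ℝ)+1)⁻¹ * ((q : ℝ) * (((M'':ℝ)+1) * ‖bA W M'' v‖))
      ≤ ‖bA W M'' v‖ := by
    rw [← mul_assoc]
    have hb := norm_nonneg (bA W M'' v)
    have : ((M:ℝ)+1)⁻¹ * ((q:ℝ) * ((M'':ℝ)+1)) ≤ 1 := by
      rw [inv_mul_le_iff₀ hMpos, mul_one]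
      exact hqL
    nlinarith [this, hb, mul_nonneg (mul_nonneg (by positivity : (0:ℝ) ≤ ((M:ℝ)+1)⁻¹) (by positivity : (0:ℝ) ≤ (q:ℝ))) (by positivity : (0:ℝ) ≤ (M'':ℝ)+1)]
  calc ((M:ℝ)+1)⁻¹ * ‖∑ j ∈ Finset.range n, (W^(j:ℤ)) v‖
      ≤ ((M:ℝ)+1)⁻¹ * ((q : ℝ) * (((M'':ℝ)+1) * ‖bA W M'' v‖)) + ((M:ℝ)+1)⁻¹ * (((M'':ℝ)+1) * ‖v‖) := by
        rw [← mul_add]; exact h1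
    _ ≤ ‖bA W M'' v‖ + ((M'':ℝ)+1)/((M:ℝ)+1) * ‖v‖ := by
        apply add_le_add h2
        rw [div_eq_inv_mul, mul_assoc]


lemma pav_congr {F G : ℤ → ℝ} (h : ∀ z, F z = G z) (N : ℤ) (M : ℕ) : pav N M F = pav N M G := by
  unfold pav; congr 1; exact Finset.sum_congr rfl fun j _ => h _

lemma dav_congr {F G : ℤ → ℝ} (h : ∀ z, F z = G z) (M : ℕ) : dav M F = dav M G := by
  unfold dav; congr 1; exact Finset.sum_congr rfl fun p _ => h _

lemma dav_nonneg {F : ℤ → ℝ} (h : ∀ z, 0 ≤ F z) (M : ℕ) : 0 ≤ dav M F := by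
  have := dav_le_dav (F := fun _ => (0:ℝ)) (G := F) h M
  rwa [dav_const] at this

lemma pav_nonneg {F : ℤ → ℝ} (h : ∀ z, 0 ≤ F z) (N : ℤ) (M : ℕ) : 0 ≤ pav N M F := by
  have := pav_le_pav (F := fun _ => (0:ℝ)) (G := F) h N M
  rwa [pav_const] at this

lemma dav_le_sqrt {F : ℤ → ℝ} (h : ∀ z, 0 ≤ F z) (M : ℕ) :
    dav M F ≤ Real.sqrt (dav M (fun z => F z^2)) := by
  have h1 := dav_sq_le M F
  have h2 := dav_nonneg h M
  have h3 : 0 ≤ dav M (fun z => F z^2) := dav_nonneg (fun z => sq_nonneg _) M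
  exact (Real.le_sqrt h2 h3).mpr h1

lemma pav_le_sqrt {F : ℤ → ℝ} (h : ∀ z, 0 ≤ F z) (N : ℤ) (M : ℕ) :
    pav N M F ≤ Real.sqrt (pav N M (fun z => F z^2)) := by
  have h3 : 0 ≤ pav N M (fun z => F z^2) := pav_nonneg (fun z => sq_nonneg _) N M
  exact (Real.le_sqrt (pav_nonneg h N M) h3).mpr (pav_sq_le N M F)

lemma bA_block_sq {M'' M : ℕ} (h : M'' ≤ M) (v : H) (hv : ‖v‖ ≤ 1) :
    ‖bA W M v‖^2 ≤ ‖bA W M'' v‖^2 + 3*(((M'':ℝ)+1)/((M:ℝ)+1)) := by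
  have hb := bA_block W h v
  have h1 : ‖bA W M'' v‖ ≤ 1 := le_trans (bA_norm_le W M'' v) hv
  have h0 : (0:ℝ) ≤ ‖bA W M v‖ := norm_nonneg _
  have h0' : (0:ℝ) ≤ ‖bA W M'' v‖ := norm_nonneg _
  set u := ((M'':ℝ)+1)/((M:ℝ)+1) with hu
  have hu0 : 0 ≤ u := by positivity
  have hu1 : u ≤ 1 := by
    rw [hu, div_le_one (by positivity)]
    have : (M'':ℝ) ≤ (M:ℝ) := by exact_mod_cast h
    linarith
  have hb' : ‖bA W M v‖ ≤ ‖bA W M'' v‖ + u := by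
    calc ‖bA W M v‖ ≤ ‖bA W M'' v‖ + u * ‖v‖ := hb
      _ ≤ ‖bA W M'' v‖ + u := by nlinarith [norm_nonneg v]
  nlinarith

lemma tendsto_norm_bA_sq (v : H) :
    Tendsto (fun M' => ‖bA W M' v‖^2) atTop (𝓝 (‖Pj W v‖^2)) :=
  ((tendsto_bA W v).norm).pow 2

lemma tendsto_rr (v : H) :
    Tendsto (fun M => ‖bA W M v - Pj W v‖) atTop (𝓝 0) := by
  have := ((tendsto_bA W v).sub (tendsto_const_nhds (x := Pj W v))).norm
  simpa using this

lemma dav_tendsto (M : ℕ) {f : ℕ → ℤ → ℝ} {F : ℤ → ℝ}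
    (h : ∀ z : ℤ, Tendsto (fun s => f s z) atTop (𝓝 (F z))) :
    Tendsto (fun s => dav M (f s)) atTop (𝓝 (dav M F)) := by
  unfold dav
  exact (tendsto_finset_sum _ (fun p _ => h _)).const_mul _

lemma pav_tendsto (N : ℤ) (M : ℕ) {f : ℕ → ℤ → ℝ} {F : ℤ → ℝ}
    (h : ∀ z : ℤ, Tendsto (fun s => f s z) atTop (𝓝 (F z))) :
    Tendsto (fun s => pav N M (f s)) atTop (𝓝 (pav N M F)) := by
  unfold pav
  exact (tendsto_finset_sum _ (fun p _ => h _)).const_mul _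

lemma arch_div (C ε : ℝ) (hC : 0 ≤ C) (hε : 0 < ε) :
    ∃ K : ℕ, ∀ M : ℕ, K ≤ M → C/((M:ℝ)+1) ≤ ε := by
  refine ⟨Nat.ceil (C/ε), fun M hM => ?_⟩
  have h1 : C/ε ≤ (M:ℝ) := le_trans (Nat.le_ceil _) (by exact_mod_cast hM)
  rw [div_le_iff₀ (by positivity)]
  have := mul_le_mul_of_nonneg_left h1 hε.le
  rw [mul_div_cancel₀ _ (ne_of_gt hε)] at this
  nlinarith

section gpart

variable (g : ℤ → H)

noncomputable def th (d e : ℤ) : ℝ := ⟪g d, (W^e) (g d)⟫_ℝ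
noncomputable def ph (d : ℤ) : ℝ := ‖Pj W (g d)‖^2
noncomputable def aq (M : ℕ) : ℝ := dav M (ph W g)
noncomputable def Wq (M M' : ℕ) : ℝ := dav M' (fun e => ‖bA W M (g e)‖^2)
noncomputable def rr (M : ℕ) (d : ℤ) : ℝ := ‖bA W M (g d) - Pj W (g d)‖
noncomputable def cc : ℝ := sInf (Set.range (aq W g))

lemma ph_nonneg (d : ℤ) : 0 ≤ ph W g d := by unfold ph; positivity

lemma I1g (n N : ℤ) (M : ℕ) :
    pav N M (fun m => th W g n m) = ⟪g n, (W^N) (bA W M (g n))⟫_ℝ := by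
  unfold pav th
  rw [inner_W_bA]

lemma I2g (d : ℤ) (M : ℕ) : ‖bA W M (g d)‖^2 = dav M (fun e => th W g d e) := by
  unfold th; exact norm_bA_sq W M (g d)

variable {g}
variable (hsym : ∀ d e, th W g d e = th W g e d)

include hsym in
lemma Wq_symm (M M' : ℕ) : Wq W g M M' = Wq W g M' M := by
  unfold Wq
  calc dav M' (fun e => ‖bA W M (g e)‖^2)
      = dav M' (fun e => dav M (fun d => th W g d e)) := by
        refine dav_congr (fun e => ?_) M'
        rw [I2g]
        exact dav_congr (fun d => hsym e d) M
    _ = dav M (fun d => dav M' (fun e => th W g d e)) :=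
        (dav_dav_swap M M' (fun d e => th W g d e)).symm
    _ = dav M (fun d => ‖bA W M' (g d)‖^2) :=
        dav_congr (fun d => (I2g W g d M').symm) M

include hsym in
lemma pav_norms_eq (N : ℤ) (M M' : ℕ) :
    pav N M (fun n => ‖bA W M' (g n)‖^2)
      = dav M' (fun e => ⟪g e, (W^N) (bA W M (g e))⟫_ℝ) := by
  calc pav N M (fun n => ‖bA W M' (g n)‖^2)
      = pav N M (fun n => dav M' (fun e => th W g n e)) :=
        pav_congr (fun n => I2g W g n M') N M
    _ = dav M' (fun e => pav N M (fun n => th W g n e)) := pav_dav_swap N M M' _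
    _ = dav M' (fun e => pav N M (fun n => th W g e n)) :=
        dav_congr (fun e => pav_congr (fun n => hsym n e) N M) M'
    _ = dav M' (fun e => ⟪g e, (W^N) (bA W M (g e))⟫_ℝ) :=
        dav_congr (fun e => I1g W g e N M) M'

lemma rr_sq (M : ℕ) (d : ℤ) :
    (rr W g M d)^2 = ‖bA W M (g d)‖^2 - ph W g d := by
  have := bA_orth W M (g d)
  unfold rr ph
  linarith

lemma aq_le_Wq (M M' : ℕ) : aq W g M' ≤ Wq W g M M' := by
  unfold aq Wq
  refine dav_le_dav (fun z => ?_) M'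
  have := bA_orth W M (g z)
  have h2 : (0:ℝ) ≤ ‖bA W M (g z) - Pj W (g z)‖^2 := by positivity
  unfold ph
  linarith

variable (hg1 : ∀ n, ‖g n‖ ≤ 1)

include hg1 in
lemma est_dav (N : ℤ) (M M' : ℕ) :
    |dav M' (fun e => ⟪g e, (W^N) (bA W M (g e))⟫_ℝ) - aq W g M'|
      ≤ Real.sqrt (Wq W g M M' - aq W g M') := by
  have hdiff : dav M' (fun e => ⟪g e, (W^N) (bA W M (g e))⟫_ℝ) - aq W g M'
      = dav M' (fun e => ⟪g e, (W^N) (bA W M (g e))⟫_ℝ - ph W g e) := by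
    rw [dav_sub]; rfl
  have hbound : ∀ z : ℤ, |⟪g z, (W^N) (bA W M (g z))⟫_ℝ - ph W g z| ≤ rr W g M z := by
    intro z
    exact inner_W_bA_est W (g z) (hg1 z) N M
  have h1 : |dav M' (fun e => ⟪g e, (W^N) (bA W M (g e))⟫_ℝ) - aq W g M'|
      ≤ dav M' (rr W g M) := by
    rw [hdiff, abs_le]
    constructor
    · have := dav_le_dav (fun z => (abs_le.mp (hbound z)).1) M'
      rw [show (fun z => -(rr W g M z)) = fun z => (0:ℝ) - rr W g M z by funext; ring] at this
      rw [dav_sub] at this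
      rw [dav_const] at this
      linarith [this]
    · exact dav_le_dav (fun z => (abs_le.mp (hbound z)).2) M'
  have h2 : dav M' (rr W g M) ≤ Real.sqrt (dav M' (fun z => (rr W g M z)^2)) :=
    dav_le_sqrt (fun z => norm_nonneg _) M'
  have h3 : dav M' (fun z => (rr W g M z)^2) = Wq W g M M' - aq W g M' := by
    rw [dav_congr (fun z => rr_sq W M z) M', dav_sub]
    rfl
  rw [h3] at h2
  linarith

include hsym in
lemma Wq_tendsto (M : ℕ) :
    Tendsto (fun M' => Wq W g M M') atTop (𝓝 (aq W g M)) := by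
  have heq : (fun M' => Wq W g M M') = fun M' => dav M (fun d => ‖bA W M' (g d)‖^2) := by
    funext M'
    rw [Wq_symm W hsym M M']
    rfl
  rw [heq]
  exact dav_tendsto M (fun z => tendsto_norm_bA_sq W (g z))

lemma aq_bddBelow : BddBelow (Set.range (aq W g)) := by
  refine ⟨0, fun x hx => ?_⟩
  obtain ⟨M, rfl⟩ := hx
  exact dav_nonneg (fun z => ph_nonneg W g z) M

lemma cc_le_aq (M : ℕ) : cc W g ≤ aq W g M :=
  csInf_le (aq_bddBelow W) ⟨M, rfl⟩

include hsym hg1 in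
lemma E2 : ∀ ε : ℝ, 0 < ε → ∃ m₂ : ℕ, ∀ M, m₂ ≤ M → aq W g M ≤ cc W g + ε := by
  intro ε hε
  obtain ⟨x, hxmem, hx⟩ := exists_lt_of_csInf_lt (Set.range_nonempty (aq W g))
    (lt_add_of_pos_right (cc W g) (half_pos hε))
  obtain ⟨M'', rfl⟩ := hxmem
  obtain ⟨K, hK⟩ := arch_div (3*((M'':ℝ)+1)) (ε/2) (by positivity) (half_pos hε)
  refine ⟨max M'' K, fun M hM => ?_⟩
  have hM'' : M'' ≤ M := le_trans (le_max_left _ _) hM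
  have hKM : K ≤ M := le_trans (le_max_right _ _) hM
  have hptw : ∀ M', Wq W g M M' ≤ Wq W g M'' M' + 3*(((M'':ℝ)+1)/((M:ℝ)+1)) := by
    intro M'
    unfold Wq
    calc dav M' (fun e => ‖bA W M (g e)‖^2)
        ≤ dav M' (fun e => ‖bA W M'' (g e)‖^2 + 3*(((M'':ℝ)+1)/((M:ℝ)+1))) :=
          dav_le_dav (fun z => bA_block_sq W hM'' (g z) (hg1 z)) M'
      _ = dav M' (fun e => ‖bA W M'' (g e)‖^2) + 3*(((M'':ℝ)+1)/((M:ℝ)+1)) := by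
          rw [dav_add, dav_const]
  have hlim1 := Wq_tendsto W hsym M
  have hlim2 : Tendsto (fun M' => Wq W g M'' M' + 3*(((M'':ℝ)+1)/((M:ℝ)+1))) atTop
      (𝓝 (aq W g M'' + 3*(((M'':ℝ)+1)/((M:ℝ)+1)))) :=
    (Wq_tendsto W hsym M'').add tendsto_const_nhds
  have hle : aq W g M ≤ aq W g M'' + 3*(((M'':ℝ)+1)/((M:ℝ)+1)) :=
    le_of_tendsto_of_tendsto hlim1 hlim2 (Eventually.of_forall hptw)
  have harch : 3*((M'':ℝ)+1)/((M:ℝ)+1) ≤ ε/2 := hK M hKM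
  have : 3*(((M'':ℝ)+1)/((M:ℝ)+1)) = 3*((M'':ℝ)+1)/((M:ℝ)+1) := by ring
  rw [this] at hle
  linarith

include hsym hg1 in
lemma E3 : ∀ ε : ℝ, 0 < ε → ∃ m₃ : ℕ, ∀ M, m₃ ≤ M → Wq W g M M ≤ cc W g + ε := by
  intro ε hε
  have hε3 : 0 < ε/3 := by positivity
  obtain ⟨x, hxmem, hx⟩ := exists_lt_of_csInf_lt (Set.range_nonempty (aq W g))
    (lt_add_of_pos_right (cc W g) hε3)
  obtain ⟨M'', rfl⟩ := hxmem
  have hlim : Tendsto (fun M => Wq W g M M'') atTop (𝓝 (aq W g M'')) := by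
    have heq : (fun M => Wq W g M M'') = fun M => dav M'' (fun d => ‖bA W M (g d)‖^2) := rfl
    rw [heq]
    exact dav_tendsto M'' (fun z => tendsto_norm_bA_sq W (g z))
  obtain ⟨K1, hK1⟩ := (Metric.tendsto_atTop.mp hlim (ε/3) hε3)
  obtain ⟨K2, hK2⟩ := arch_div (3*((M'':ℝ)+1)) (ε/3) (by positivity) hε3
  refine ⟨max M'' (max K1 K2), fun M hM => ?_⟩
  have hM'' : M'' ≤ M := le_trans (le_max_left _ _) hM
  have hKM1 : K1 ≤ M := le_trans (le_trans (le_max_left _ _) (le_max_right _ _)) hM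
  have hKM2 : K2 ≤ M := le_trans (le_trans (le_max_right _ _) (le_max_right _ _)) hM
  have hptw : Wq W g M M ≤ Wq W g M'' M + 3*(((M'':ℝ)+1)/((M:ℝ)+1)) := by
    unfold Wq
    calc dav M (fun e => ‖bA W M (g e)‖^2)
        ≤ dav M (fun e => ‖bA W M'' (g e)‖^2 + 3*(((M'':ℝ)+1)/((M:ℝ)+1))) :=
          dav_le_dav (fun z => bA_block_sq W hM'' (g z) (hg1 z)) M
      _ = dav M (fun e => ‖bA W M'' (g e)‖^2) + 3*(((M'':ℝ)+1)/((M:ℝ)+1)) := by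
          rw [dav_add, dav_const]
  have hsymm : Wq W g M'' M = Wq W g M M'' := Wq_symm W hsym M'' M
  have hclose : |Wq W g M M'' - aq W g M''| < ε/3 := by
    have := hK1 M hKM1
    rwa [Real.dist_eq] at this
  have harch : 3*((M'':ℝ)+1)/((M:ℝ)+1) ≤ ε/3 := hK2 M hKM2
  have habs := abs_lt.mp hclose
  have hcc := cc_le_aq W (g := g) M''
  have h3 : 3*(((M'':ℝ)+1)/((M:ℝ)+1)) = 3*((M'':ℝ)+1)/((M:ℝ)+1) := by ring
  rw [h3] at hptw
  linarith

include hsym hg1 in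
lemma E4 : ∀ ε : ℝ, 0 < ε → ∃ m₄ : ℕ, ∀ M, m₄ ≤ M → ∀ N : ℤ,
    cc W g - ε ≤ pav N M (ph W g) := by
  intro ε hε
  obtain ⟨m₂, hm₂⟩ := E2 W hsym hg1 (ε^2) (by positivity)
  refine ⟨m₂, fun M hM N => ?_⟩
  have key : ∀ M', m₂ ≤ M' →
      cc W g - Real.sqrt (Wq W g M M' - cc W g)
        ≤ pav N M (fun n => ‖bA W M' (g n)‖^2) := by
    intro M' _
    rw [pav_norms_eq W hsym N M M']
    have h2 := est_dav W hg1 N M M'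
    have h3 := cc_le_aq W (g := g) M'
    have h4 : Real.sqrt (Wq W g M M' - aq W g M') ≤ Real.sqrt (Wq W g M M' - cc W g) :=
      Real.sqrt_le_sqrt (by linarith)
    have h5 := (abs_le.mp h2).1
    linarith
  have hL : Tendsto (fun M' => pav N M (fun n => ‖bA W M' (g n)‖^2)) atTop
      (𝓝 (pav N M (ph W g))) :=
    pav_tendsto N M (fun z => tendsto_norm_bA_sq W (g z))
  have hR : Tendsto (fun M' => cc W g - Real.sqrt (Wq W g M M' - cc W g)) atTop
      (𝓝 (cc W g - Real.sqrt (aq W g M - cc W g))) := by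
    apply Tendsto.sub tendsto_const_nhds
    exact ((Wq_tendsto W hsym M).sub tendsto_const_nhds).sqrt
  have hmain : cc W g - Real.sqrt (aq W g M - cc W g) ≤ pav N M (ph W g) :=
    le_of_tendsto_of_tendsto hR hL (eventually_atTop.mpr ⟨m₂, key⟩)
  have h5 : Real.sqrt (aq W g M - cc W g) ≤ ε := by
    have h6 : aq W g M - cc W g ≤ ε^2 := by
      have := hm₂ M hM
      linarith
    calc Real.sqrt (aq W g M - cc W g) ≤ Real.sqrt (ε^2) := Real.sqrt_le_sqrt h6
      _ = ε := Real.sqrt_sq hε.le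
  linarith

set_option maxHeartbeats 1000000 in
include hsym hg1 in
theorem abstract_main (ι f : H) (hι : W ι = ι) (hιn : ‖ι‖ = 1) (hf1 : ‖f‖ ≤ 1)
    (hgι : ∀ n : ℤ, ⟪g n, ι⟫_ℝ = ⟪f, (W^n) f⟫_ℝ) :
    ∀ ε : ℝ, 0 < ε → ∃ M₀ : ℕ, ∀ M, M₀ ≤ M → ∀ N₁ N₂ : ℤ,
      ∃ n m : ℤ, n ∈ Set.Icc N₁ (N₁+(M:ℤ)) ∧ m ∈ Set.Icc N₂ (N₂+(M:ℤ)) ∧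
        ⟪g n, (W^m) (g n)⟫_ℝ > ⟪f, ι⟫_ℝ^4 - ε := by
  intro ε hε
  -- basic facts about ι and Pj
  have hmem : ι ∈ (Wc W).eqLocus (1 : H →L[ℝ] H) := by
    rw [LinearMap.mem_eqLocus]
    simpa [Wc] using hι
  have hPjι : Pj W ι = ι := by
    have h := Submodule.orthogonalProjectionOnto_mem_subspace_eq_self
      (K := (Wc W).eqLocus (1 : H →L[ℝ] H)) ⟨ι, hmem⟩
    exact congrArg Subtype.val h
  have hinnerι : ∀ v : H, ⟪Pj W v, ι⟫_ℝ = ⟪v, ι⟫_ℝ := by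
    intro v
    rw [Pj_inner, hPjι]
  have sq_le_Pj : ∀ v : H, ⟪v, ι⟫_ℝ^2 ≤ ‖Pj W v‖^2 := by
    intro v
    have h1 : |⟪v, ι⟫_ℝ| = |⟪Pj W v, ι⟫_ℝ| := by rw [hinnerι]
    have h2 : |⟪Pj W v, ι⟫_ℝ| ≤ ‖Pj W v‖ * ‖ι‖ := abs_real_inner_le_norm _ _
    rw [hιn, mul_one] at h2
    rw [← h1] at h2
    have := abs_le.mp h2
    nlinarith [this.1, this.2]
  set β := ⟪f, ι⟫_ℝ with hβ
  have hβ1 : β^2 ≤ 1 := by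
    have h2 : |β| ≤ ‖f‖ * ‖ι‖ := abs_real_inner_le_norm _ _
    rw [hιn, mul_one] at h2
    have h3 := abs_le.mp (le_trans h2 hf1)
    nlinarith [h3.1, h3.2]
  -- thresholds
  obtain ⟨m₁, hm₁⟩ : ∃ m₁ : ℕ, ∀ M, m₁ ≤ M → ‖bA W M f - Pj W f‖ ≤ ε/8 := by
    obtain ⟨m₁, hm₁⟩ := Metric.tendsto_atTop.mp (tendsto_rr W f) (ε/8) (by positivity)
    refine ⟨m₁, fun M hM => ?_⟩
    have := hm₁ M hM
    rw [Real.dist_eq, sub_zero] at this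
    have h := abs_le.mp this.le
    exact h.2
  obtain ⟨m₂, hm₂⟩ := E2 W hsym hg1 (ε^2/64) (by positivity)
  obtain ⟨m₃, hm₃⟩ := E3 W hsym hg1 ((ε^2/64)^2) (by positivity)
  obtain ⟨m₄, hm₄⟩ := E4 W hsym hg1 (ε^2/64) (by positivity)
  refine ⟨max (max m₁ m₂) (max m₃ m₄), fun M hM N₁ N₂ => ?_⟩
  have hMm₁ : m₁ ≤ M := le_trans (le_trans (le_max_left _ _) (le_max_left _ _)) hM
  have hMm₂ : m₂ ≤ M := le_trans (le_trans (le_max_right _ _) (le_max_left _ _)) hM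
  have hMm₃ : m₃ ≤ M := le_trans (le_trans (le_max_left _ _) (le_max_right _ _)) hM
  have hMm₄ : m₄ ≤ M := le_trans (le_trans (le_max_right _ _) (le_max_right _ _)) hM
  -- Step A : lower bound for the double average
  have hstep1 : ∀ n : ℤ, ph W g n - rr W g M n ≤ pav N₂ M (fun m => th W g n m) := by
    intro n
    rw [I1g]
    have h := inner_W_bA_est W (g n) (hg1 n) N₂ M
    have h2 := (abs_le.mp h).1
    unfold ph rr
    linarith
  have hA : pav N₁ M (ph W g) - pav N₁ M (rr W g M)
      ≤ pav N₁ M (fun n => pav N₂ M (fun m => th W g n m)) := by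
    have h1 := pav_le_pav hstep1 N₁ M
    have h2 : pav N₁ M (fun n => ph W g n - rr W g M n)
        = pav N₁ M (ph W g) - pav N₁ M (rr W g M) := pav_sub N₁ M _ _
    linarith
  -- bound for pav rr
  have hrr2 : pav N₁ M (fun n => (rr W g M n)^2)
      = pav N₁ M (fun n => ‖bA W M (g n)‖^2) - pav N₁ M (ph W g) := by
    rw [pav_congr (fun z => rr_sq W M z) N₁ M, pav_sub]
  have hupper : pav N₁ M (fun n => ‖bA W M (g n)‖^2) ≤ cc W g + ε^2/64 + ε^2/64 := by
    rw [pav_norms_eq W hsym N₁ M M]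
    have h2 := est_dav W hg1 N₁ M M
    have h3 : Real.sqrt (Wq W g M M - aq W g M) ≤ ε^2/64 := by
      have h4 : Wq W g M M - aq W g M ≤ (ε^2/64)^2 := by
        have h5 := hm₃ M hMm₃
        have h6 := cc_le_aq W (g := g) M
        linarith
      calc Real.sqrt (Wq W g M M - aq W g M) ≤ Real.sqrt ((ε^2/64)^2) :=
            Real.sqrt_le_sqrt h4
        _ = ε^2/64 := Real.sqrt_sq (by positivity)
    have h7 := (abs_le.mp h2).2
    have h8 := hm₂ M hMm₂
    linarith
  have hlower : cc W g - ε^2/64 ≤ pav N₁ M (ph W g) := hm₄ M hMm₄ N₁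
  have hrr2le : pav N₁ M (fun n => (rr W g M n)^2) ≤ 3*(ε^2/64) := by
    rw [hrr2]; linarith
  have hpavrr : pav N₁ M (rr W g M) ≤ ε/4 := by
    have h1 : pav N₁ M (rr W g M) ≤ Real.sqrt (pav N₁ M (fun n => (rr W g M n)^2)) :=
      pav_le_sqrt (fun z => norm_nonneg _) N₁ M
    have h2 : Real.sqrt (pav N₁ M (fun n => (rr W g M n)^2)) ≤ Real.sqrt ((ε/4)^2) := by
      apply Real.sqrt_le_sqrt
      nlinarith
    rw [Real.sqrt_sq (by positivity)] at h2
    linarith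
  -- Step B : lower bound for pav ph
  have hphlow : β^4 - ε/4 ≤ pav N₁ M (ph W g) := by
    have hs_eq : pav N₁ M (fun n => ⟪g n, ι⟫_ℝ) = ⟪f, (W^N₁) (bA W M f)⟫_ℝ := by
      rw [pav_congr hgι N₁ M]
      unfold pav
      rw [inner_W_bA]
    set s := pav N₁ M (fun n => ⟪g n, ι⟫_ℝ) with hs
    have hs_lb : β^2 - ε/8 ≤ s := by
      rw [hs_eq]
      have h1 := inner_W_bA_est W f hf1 N₁ M
      have h2 := (abs_le.mp h1).1
      have h3 := sq_le_Pj f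
      have h4 := hm₁ M hMm₁
      linarith
    have hph1 : pav N₁ M (fun n => ⟪g n, ι⟫_ℝ^2) ≤ pav N₁ M (ph W g) := by
      apply pav_le_pav (fun z => ?_)
      exact sq_le_Pj (g z)
    have hph2 : s^2 ≤ pav N₁ M (fun n => ⟪g n, ι⟫_ℝ^2) := pav_sq_le N₁ M _
    have hphpos : 0 ≤ pav N₁ M (ph W g) := pav_nonneg (fun z => ph_nonneg W g z) N₁ M
    rcases le_or_gt 0 (β^2 - ε/8) with hcase | hcase
    · have h0 : (0:ℝ) ≤ β^2 - ε/8 := hcase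
      have h1 : (β^2 - ε/8)^2 ≤ s^2 := by
        apply pow_le_pow_left₀ h0 hs_lb
      have h2 : β^4 - ε/4 ≤ (β^2 - ε/8)^2 := by nlinarith [hβ1, hε, sq_nonneg ε]
      linarith
    · have hβ4 : β^4 ≤ β^2 := by nlinarith [sq_nonneg β, sq_nonneg (β^2)]
      linarith
  -- combine
  have htotal : β^4 - ε/2 ≤ pav N₁ M (fun n => pav N₂ M (fun m => th W g n m)) := by
    have := hA
    linarith
  -- extraction
  obtain ⟨j, hj, hj2⟩ := exists_ge_pav N₁ M (fun n => pav N₂ M (fun m => th W g n m))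
  obtain ⟨i, hi, hi2⟩ := exists_ge_pav N₂ M (fun m => th W g (N₁ + j) m)
  refine ⟨N₁ + j, N₂ + i, ?_, ?_, ?_⟩
  · constructor
    · exact le_add_of_nonneg_right (by exact_mod_cast Nat.zero_le j)
    · have : (j:ℤ) ≤ (M:ℤ) := by exact_mod_cast hj
      linarith
  · constructor
    · exact le_add_of_nonneg_right (by exact_mod_cast Nat.zero_le i)
    · have : (i:ℤ) ≤ (M:ℤ) := by exact_mod_cast hi
      linarith
  · have hfinal : β^4 - ε/2 ≤ th W g (N₁+j) (N₂+i) := by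
      calc β^4 - ε/2 ≤ pav N₁ M (fun n => pav N₂ M (fun m => th W g n m)) := htotal
        _ ≤ pav N₂ M (fun m => th W g (N₁+j) m) := hj2
        _ ≤ th W g (N₁+j) (N₂+i) := hi2
    have : th W g (N₁+j) (N₂+i) = ⟪g (N₁+j), (W^(N₂+i)) (g (N₁+j))⟫_ℝ := rfl
    rw [this] at hfinal
    have hε2 : β^4 - ε < β^4 - ε/2 := by linarith
    exact lt_of_lt_of_le hε2 hfinal

end gpart

end Wpart

end BergelsonAux

namespace BergelsonApp
open BergelsonAux
section app
variable {X : Type*} [MeasurableSpace X] (μ : MeasureTheory.Measure X)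
  [MeasureTheory.IsProbabilityMeasure μ]
  (T : Equiv.Perm X)
  (hT : MeasureTheory.MeasurePreserving T μ μ)
  (hT_symm : Measurable ⇑T.symm)

include hT hT_symm in
lemma mp_symm : MeasurePreserving ⇑T.symm μ μ := by
  exact MeasurePreserving.symm
    ({ toEquiv := T, measurable_toFun := hT.measurable,
       measurable_invFun := hT_symm } : X ≃ᵐ X) hT

lemma mp_pow (S : Equiv.Perm X) (hS : MeasurePreserving ⇑S μ μ) (k : ℕ) :
    MeasurePreserving ⇑(S^k) μ μ := by
  induction k with
  | zero => simpa using MeasurePreserving.id μ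
  | succ k ih =>
    rw [pow_succ]
    have : ⇑(S^k * S) = ⇑(S^k) ∘ ⇑S := rfl
    rw [this]
    exact ih.comp hS

include hT hT_symm in
lemma mp_zpow (n : ℤ) : MeasurePreserving ⇑(T^n) μ μ := by
  rcases n with k | k
  · rw [Int.ofNat_eq_natCast, zpow_natCast]
    exact mp_pow μ T hT k
  · rw [zpow_negSucc, ← inv_pow]
    exact mp_pow μ T⁻¹ (mp_symm μ T hT hT_symm) (k+1)

include hT hT_symm in
lemma VVs_id (u : Lp ℝ 2 μ) :
    Lp.compMeasurePreserving ⇑T hT (Lp.compMeasurePreserving ⇑T.symm (mp_symm μ T hT hT_symm) u)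
      = u := by
  set hTs := mp_symm μ T hT hT_symm
  have h1 : ⇑(Lp.compMeasurePreserving ⇑T hT (Lp.compMeasurePreserving ⇑T.symm hTs u))
      =ᵐ[μ] ⇑(Lp.compMeasurePreserving ⇑T.symm hTs u) ∘ ⇑T :=
    Lp.coeFn_compMeasurePreserving _ hT
  have h2 : ⇑(Lp.compMeasurePreserving ⇑T.symm hTs u) =ᵐ[μ] ⇑u ∘ ⇑T.symm :=
    Lp.coeFn_compMeasurePreserving _ hTs
  have h3 : (⇑(Lp.compMeasurePreserving ⇑T.symm hTs u)) ∘ ⇑T =ᵐ[μ] (⇑u ∘ ⇑T.symm) ∘ ⇑T :=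
    hT.quasiMeasurePreserving.ae_eq_comp h2
  have h4 : (⇑u ∘ ⇑T.symm) ∘ ⇑T = ⇑u := by
    funext x; simp
  apply Lp.ext
  calc ⇑(Lp.compMeasurePreserving ⇑T hT (Lp.compMeasurePreserving ⇑T.symm hTs u))
      =ᵐ[μ] (⇑(Lp.compMeasurePreserving ⇑T.symm hTs u)) ∘ ⇑T := h1
    _ =ᵐ[μ] (⇑u ∘ ⇑T.symm) ∘ ⇑T := h3
    _ =ᵐ[μ] ⇑u := by rw [h4]

include hT hT_symm in
lemma VsV_id (u : Lp ℝ 2 μ) :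
    Lp.compMeasurePreserving ⇑T.symm (mp_symm μ T hT hT_symm) (Lp.compMeasurePreserving ⇑T hT u)
      = u := by
  set hTs := mp_symm μ T hT hT_symm
  have h1 : ⇑(Lp.compMeasurePreserving ⇑T.symm hTs (Lp.compMeasurePreserving ⇑T hT u))
      =ᵐ[μ] ⇑(Lp.compMeasurePreserving ⇑T hT u) ∘ ⇑T.symm :=
    Lp.coeFn_compMeasurePreserving _ hTs
  have h2 : ⇑(Lp.compMeasurePreserving ⇑T hT u) =ᵐ[μ] ⇑u ∘ ⇑T :=
    Lp.coeFn_compMeasurePreserving _ hT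
  have h3 : (⇑(Lp.compMeasurePreserving ⇑T hT u)) ∘ ⇑T.symm =ᵐ[μ] (⇑u ∘ ⇑T) ∘ ⇑T.symm :=
    hTs.quasiMeasurePreserving.ae_eq_comp h2
  have h4 : (⇑u ∘ ⇑T) ∘ ⇑T.symm = ⇑u := by
    funext x; simp
  apply Lp.ext
  calc ⇑(Lp.compMeasurePreserving ⇑T.symm hTs (Lp.compMeasurePreserving ⇑T hT u))
      =ᵐ[μ] (⇑(Lp.compMeasurePreserving ⇑T hT u)) ∘ ⇑T.symm := h1
    _ =ᵐ[μ] (⇑u ∘ ⇑T) ∘ ⇑T.symm := h3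
    _ =ᵐ[μ] ⇑u := by rw [h4]

/-- The Koopman operator as a linear isometry equivalence of `L²(μ)`. -/
noncomputable def Wop : Lp ℝ 2 μ ≃ₗᵢ[ℝ] Lp ℝ 2 μ where
  toLinearEquiv := LinearEquiv.ofLinear
    (Lp.compMeasurePreservingₗ ℝ ⇑T hT)
    (Lp.compMeasurePreservingₗ ℝ ⇑T.symm (mp_symm μ T hT hT_symm))
    (LinearMap.ext fun u => VVs_id μ T hT hT_symm u)
    (LinearMap.ext fun u => VsV_id μ T hT hT_symm u)
  norm_map' := fun u => Lp.norm_compMeasurePreserving u hT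

lemma Wop_apply (u : Lp ℝ 2 μ) :
    Wop μ T hT hT_symm u = Lp.compMeasurePreserving ⇑T hT u := rfl

lemma Wop_symm_apply (u : Lp ℝ 2 μ) :
    (Wop μ T hT hT_symm)⁻¹ u
      = Lp.compMeasurePreserving ⇑T.symm (mp_symm μ T hT hT_symm) u := rfl

lemma zpowW {H : Type*} [NormedAddCommGroup H] [InnerProductSpace ℝ H]
    (W : H ≃ₗᵢ[ℝ] H) (a b : ℤ) (v : H) : (W^(a+b)) v = (W^a) ((W^b) v) := by
  rw [zpow_add]; rfl

lemma indCongr {s t : Set X} (h : s = t) (hs : MeasurableSet s) (ht : MeasurableSet t) :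
    indicatorConstLp (μ := μ) 2 hs (measure_ne_top μ s) (1:ℝ)
      = indicatorConstLp 2 ht (measure_ne_top μ t) 1 := by
  subst h; rfl

include hT hT_symm in
lemma Wop_zpow_ind (n : ℤ) {s : Set X} (hs : MeasurableSet s) :
    ((Wop μ T hT hT_symm)^n) (indicatorConstLp 2 hs (measure_ne_top μ s) (1:ℝ))
      = indicatorConstLp 2 (hs.preimage (mp_zpow μ T hT hT_symm n).measurable)
          (measure_ne_top μ _) 1 := by
  induction n using Int.induction_on generalizing s with
  | zero =>
    rw [zpow_zero]
    have h : s = (⇑(T^(0:ℤ)))⁻¹' s := by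
      ext x; simp
    exact indCongr μ h hs _
  | succ n ih =>
    have h1 : ((Wop μ T hT hT_symm)^((n:ℤ)+1)) (indicatorConstLp 2 hs (measure_ne_top μ s) (1:ℝ))
        = ((Wop μ T hT hT_symm)^(n:ℤ))
            ((Wop μ T hT hT_symm) (indicatorConstLp 2 hs (measure_ne_top μ s) (1:ℝ))) := by
      rw [show (n:ℤ)+1 = (n:ℤ) + 1 from rfl, zpowW, zpow_one]
    rw [h1, Wop_apply, Lp.indicatorConstLp_compMeasurePreserving]
    rw [indCongr μ rfl (hs.preimage hT.measurable)
      (hs.preimage hT.measurable)]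
    rw [ih (hs.preimage hT.measurable)]
    refine indCongr μ ?_ _ _
    ext x
    simp only [Set.mem_preimage]
    have hcomp : ⇑T ((⇑(T^(n:ℤ))) x) = ⇑(T^((n:ℤ)+1)) x := by
      rw [show (n:ℤ)+1 = 1+(n:ℤ) by ring, zpow_add, zpow_one]
      rfl
    rw [hcomp]
  | pred n ih =>
    have h1 : ((Wop μ T hT hT_symm)^(-(n:ℤ)-1)) (indicatorConstLp 2 hs (measure_ne_top μ s) (1:ℝ))
        = ((Wop μ T hT hT_symm)^(-(n:ℤ)))
            (((Wop μ T hT hT_symm)^(-1:ℤ)) (indicatorConstLp 2 hs (measure_ne_top μ s) (1:ℝ))) := by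
      rw [show -(n:ℤ)-1 = (-(n:ℤ)) + (-1) by ring, zpowW]
    rw [h1, zpow_neg_one, Wop_symm_apply, Lp.indicatorConstLp_compMeasurePreserving]
    rw [indCongr μ rfl (hs.preimage (mp_symm μ T hT hT_symm).measurable)
      (hs.preimage (mp_symm μ T hT hT_symm).measurable)]
    rw [ih (hs.preimage (mp_symm μ T hT hT_symm).measurable)]
    refine indCongr μ ?_ _ _
    ext x
    simp only [Set.mem_preimage]
    have hcomp : ⇑T.symm ((⇑(T^(-(n:ℤ)))) x) = ⇑(T^(-(n:ℤ)-1)) x := by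
      rw [show -(n:ℤ)-1 = (-1)+(-(n:ℤ)) by ring, zpow_add]
      rfl
    rw [hcomp]

lemma inner_ind {s t : Set X} (hs : MeasurableSet s) (ht : MeasurableSet t) :
    ⟪indicatorConstLp (μ := μ) 2 hs (measure_ne_top μ s) (1:ℝ),
      indicatorConstLp 2 ht (measure_ne_top μ t) 1⟫_ℝ = (μ (t ∩ s)).toReal := by
  rw [L2.inner_indicatorConstLp_one hs (measure_ne_top μ s)]
  rw [setIntegral_indicatorConstLp hs ht (measure_ne_top μ t) (1:ℝ)]
  rw [smul_eq_mul, mul_one]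
  rfl

lemma norm_ind_le {s : Set X} (hs : MeasurableSet s) :
    ‖indicatorConstLp (μ := μ) 2 hs (measure_ne_top μ s) (1:ℝ)‖ ≤ 1 := by
  rw [norm_indicatorConstLp (by norm_num) (by norm_num)]
  rw [norm_one, one_mul]
  apply Real.rpow_le_one ENNReal.toReal_nonneg
  · have h1 : μ s ≤ 1 := prob_le_one
    calc (μ s).toReal ≤ (1:ℝ≥0∞).toReal := ENNReal.toReal_mono (by norm_num) h1
      _ = 1 := by norm_num
  · positivity

lemma norm_ind_univ :
    ‖indicatorConstLp (μ := μ) 2 MeasurableSet.univ (measure_ne_top μ Set.univ) (1:ℝ)‖ = 1 := by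
  rw [norm_indicatorConstLp (by norm_num) (by norm_num)]
  rw [norm_one, one_mul, measureReal_def, measure_univ]
  norm_num

end app

end BergelsonApp

open BergelsonAux BergelsonApp

/-- Bergelson. For an invertible measure-preserving transformation `T` of a
probability space and any measurable `B` and `c > 0`, the set of `(n, m) ∈ ℤ²` with
`μ(B ∩ T^{-n}B ∩ T^{-m}(B ∩ T^{-n}B)) > μ(B)⁴ - c` meets every sufficiently large square:
there is `M₀` such that for all `M ≥ M₀` and all `N₁, N₂ ∈ ℤ` it intersects
`[N₁, N₁+M] × [N₂, N₂+M]`. -/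
theorem bergelson_square_recurrence
    {X : Type*} [MeasurableSpace X] (μ : MeasureTheory.Measure X)
    [MeasureTheory.IsProbabilityMeasure μ]
    (T : Equiv.Perm X)
    (hT : MeasureTheory.MeasurePreserving T μ μ)
    (hT_symm : Measurable ⇑T.symm)
    (B : Set X) (hB : MeasurableSet B) :
    ∀ c > (0 : ℝ), ∃ M₀ : ℕ, ∀ M : ℕ, M₀ ≤ M → ∀ N₁ N₂ : ℤ,
      ∃ n m : ℤ, n ∈ Set.Icc N₁ (N₁ + M) ∧ m ∈ Set.Icc N₂ (N₂ + M) ∧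
        (μ (B ∩ (⇑(T ^ n) ⁻¹' B) ∩ (⇑(T ^ m) ⁻¹' (B ∩ (⇑(T ^ n) ⁻¹' B))))).toReal >
          (μ B).toReal ^ 4 - c := by
  intro c hc
  set W := Wop μ T hT hT_symm with hW
  have hmp : ∀ n : ℤ, MeasureTheory.MeasurePreserving ⇑(T^n) μ μ :=
    fun n => mp_zpow μ T hT hT_symm n
  set Cs : ℤ → Set X := fun n => B ∩ (⇑(T^n))⁻¹' B with hCsdef
  have hCs : ∀ n, MeasurableSet (Cs n) := fun n => hB.inter (hB.preimage (hmp n).measurable)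
  set g : ℤ → MeasureTheory.Lp ℝ 2 μ :=
    fun n => indicatorConstLp 2 (hCs n) (measure_ne_top μ _) (1:ℝ) with hgdef
  set f : MeasureTheory.Lp ℝ 2 μ := indicatorConstLp 2 hB (measure_ne_top μ B) (1:ℝ) with hfdef
  set ι : MeasureTheory.Lp ℝ 2 μ :=
    indicatorConstLp 2 MeasurableSet.univ (measure_ne_top μ Set.univ) (1:ℝ) with hιdef
  -- commutation of powers of T
  have hTde : ∀ (d e : ℤ) (x : X), ⇑(T^d) (⇑(T^e) x) = ⇑(T^e) (⇑(T^d) x) := by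
    intro d e x
    have h1 : ⇑(T^d) (⇑(T^e) x) = ⇑(T^(d+e)) x := by rw [zpow_add]; rfl
    have h2 : ⇑(T^e) (⇑(T^d) x) = ⇑(T^(e+d)) x := by rw [zpow_add]; rfl
    rw [h1, h2, add_comm]
  -- value of th
  have hval : ∀ d e : ℤ, th W g d e = (μ ((⇑(T^e))⁻¹' (Cs d) ∩ Cs d)).toReal := by
    intro d e
    show ⟪g d, (W^e) (g d)⟫_ℝ = _
    rw [hgdef]
    simp only []
    rw [Wop_zpow_ind μ T hT hT_symm e (hCs d), inner_ind]
  -- symmetry of th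
  have hsetsym : ∀ d e : ℤ, (⇑(T^e))⁻¹' (Cs d) ∩ Cs d = (⇑(T^d))⁻¹' (Cs e) ∩ Cs e := by
    intro d e
    rw [hCsdef]
    simp only []
    ext x
    simp only [Set.mem_inter_iff, Set.mem_preimage]
    rw [hTde d e x]
    tauto
  have hsym : ∀ d e : ℤ, th W g d e = th W g e d := by
    intro d e
    rw [hval d e, hval e d, hsetsym d e]
  have hg1 : ∀ n : ℤ, ‖g n‖ ≤ 1 := fun n => norm_ind_le μ (hCs n)
  have hf1 : ‖f‖ ≤ 1 := norm_ind_le μ hB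
  have hιn : ‖ι‖ = 1 := norm_ind_univ μ
  have hι : W ι = ι := by
    have h1 : (W^(1:ℤ)) ι = indicatorConstLp 2
        (MeasurableSet.univ.preimage (hmp 1).measurable) (measure_ne_top μ _) 1 :=
      Wop_zpow_ind μ T hT hT_symm 1 MeasurableSet.univ
    rw [zpow_one] at h1
    rw [hιdef, h1]
    exact indCongr μ Set.preimage_univ _ _
  have hgι : ∀ n : ℤ, ⟪g n, ι⟫_ℝ = ⟪f, (W^n) f⟫_ℝ := by
    intro n
    have h1 : ⟪g n, ι⟫_ℝ = (μ (Set.univ ∩ Cs n)).toReal := inner_ind μ (hCs n) _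
    have h2 : (W^n) f = indicatorConstLp 2 (hB.preimage (hmp n).measurable)
        (measure_ne_top μ _) 1 := Wop_zpow_ind μ T hT hT_symm n hB
    rw [h1, h2, inner_ind μ hB (hB.preimage (hmp n).measurable)]
    congr 1
    rw [Set.univ_inter]
    simp only [hCsdef]
    exact congrArg μ (Set.inter_comm _ _)
  obtain ⟨M₀, hM₀⟩ := abstract_main W hsym hg1 ι f hι hιn hf1 hgι c hc
  refine ⟨M₀, fun M hM N₁ N₂ => ?_⟩
  obtain ⟨n, m, hn, hm, hgt⟩ := hM₀ M hM N₁ N₂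
  refine ⟨n, m, hn, hm, ?_⟩
  have h1 : ⟪g n, (W^m) (g n)⟫_ℝ
      = (μ (B ∩ (⇑(T^n))⁻¹' B ∩ (⇑(T^m))⁻¹' (B ∩ (⇑(T^n))⁻¹' B))).toReal := by
    have := hval n m
    rw [show th W g n m = ⟪g n, (W^m) (g n)⟫_ℝ from rfl] at this
    rw [this]
    congr 1
    simp only [hCsdef]
    exact congrArg μ (Set.inter_comm _ _)
  have h2 : ⟪f, ι⟫_ℝ = (μ B).toReal := by
    rw [hfdef, hιdef, inner_ind μ hB MeasurableSet.univ, Set.univ_inter]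
  rw [h1, h2] at hgt
  exact hgt
end
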